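/- arXiv:1003.0564 — 4 statements merged into one kernel-verified Lean document; each statement's English description precedes it below -/
import Mathlib

section
/- Let A be an n×n generalized Cartan matrix. Then A is symmetrizable if and only if for every k with 2 ≤ k ≤ n and every sequence of indices i_1, …, i_k with i_s ≠ i_{s+1} for all s (indices taken mod k), one has A(i_1,i_2)·A(i_2,i_3)·…·A(i_k,i_1) = A(i_2,i_1)·A(i_3,i_2)·…·A(i_1,i_k). -/
/-- An integer matrix is a generalized Cartan matrix (GCM). -/
def IsGCM {ι : Type} (A : Matrix ι ι ℤ) : Prop :=
  (∀ i, A i i = 2) ∧ (∀ i j, i ≠ j → A i j ≤ 0) ∧ (∀ i j, A i j = 0 → A j i = 0)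

/-- A GCM is symmetrizable if there are nonzero rationals `d i` with
`d i * A i j = d j * A j i` for all `i, j`. -/
def IsSymmetrizable {ι : Type} (A : Matrix ι ι ℤ) : Prop :=
  ∃ d : ι → ℚ, (∀ i, d i ≠ 0) ∧ ∀ i j, d i * (A i j : ℚ) = d j * (A j i : ℚ)

namespace KacAux

variable {n : ℕ}

/-- Product of `g` along the chain `x :: l`. -/
def pprod (g : Fin n → Fin n → ℚ) : Fin n → List (Fin n) → ℚ
  | _, [] => 1
  | x, y :: ys => g x y * pprod g y ys

@[simp] lemma pprod_nil (g : Fin n → Fin n → ℚ) (x : Fin n) : pprod g x [] = 1 := rfl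

@[simp] lemma pprod_cons (g : Fin n → Fin n → ℚ) (x y : Fin n) (ys : List (Fin n)) :
    pprod g x (y :: ys) = g x y * pprod g y ys := rfl

lemma pprod_split (g : Fin n → Fin n → ℚ) (a y : Fin n) (p q : List (Fin n)) :
    pprod g a (p ++ y :: q) = pprod g a (p ++ [y]) * pprod g y q := by
  induction p generalizing a with
  | nil => simp
  | cons z p ih => simp only [List.cons_append, pprod_cons, ih z]; ring

lemma pprod_concat (g : Fin n → Fin n → ℚ) (x y : Fin n) (l : List (Fin n)) :
    pprod g x (l ++ [y]) = pprod g x l * g ((x :: l).getLast (by simp)) y := by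
  induction l generalizing x with
  | nil => simp
  | cons z l ih =>
      simp only [List.cons_append, pprod_cons, ih z]
      have h1 : (x :: z :: l).getLast (by simp) = (z :: l).getLast (by simp) :=
        List.getLast_cons (by simp)
      rw [h1]
      ring

lemma pprod_ne_zero (g : Fin n → Fin n → ℚ) (x : Fin n) (l : List (Fin n))
    (h : List.Chain (fun a b => g a b ≠ 0) x l) : pprod g x l ≠ 0 := by
  induction l generalizing x with
  | nil => simp
  | cons y l ih =>
      change List.IsChain _ (x :: y :: l) at h
      rw [List.isChain_cons_cons] at h
      exact mul_ne_zero h.1 (ih y h.2)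

lemma pprod_div (g h : Fin n → Fin n → ℚ) (x : Fin n) (l : List (Fin n)) :
    pprod (fun a b => g a b / h a b) x l = pprod g x l / pprod h x l := by
  induction l generalizing x with
  | nil => simp
  | cons y l ih => simp only [pprod_cons, ih y]; rw [div_mul_div_comm]

/-- Cyclic product over a list of vertices. -/
def cyc (g : Fin n → Fin n → ℚ) : List (Fin n) → ℚ
  | [] => 1
  | x :: l => pprod g x (l ++ [x])

@[simp] lemma cyc_nil (g : Fin n → Fin n → ℚ) : cyc g [] = 1 := rfl

@[simp] lemma cyc_cons (g : Fin n → Fin n → ℚ) (x : Fin n) (l : List (Fin n)) :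
    cyc g (x :: l) = pprod g x (l ++ [x]) := rfl

/-- Cyclically consecutive entries of the list are distinct. -/
def NeCyc : List (Fin n) → Prop
  | [] => True
  | x :: l => List.Chain (· ≠ ·) x (l ++ [x])

@[simp] lemma NeCyc_cons (x : Fin n) (l : List (Fin n)) :
    NeCyc (x :: l) ↔ List.Chain (· ≠ ·) x (l ++ [x]) := Iff.rfl

lemma cyc_split (g : Fin n → Fin n → ℚ) (a : Fin n) (s t u : List (Fin n)) :
    cyc g (s ++ a :: t ++ a :: u) = cyc g (a :: t) * cyc g (s ++ a :: u) := by
  cases s with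
  | nil =>
      simp only [List.nil_append, cyc_cons, List.append_assoc, List.cons_append,
        List.nil_append]
      rw [pprod_split g a a t (u ++ [a])]
  | cons b s' =>
      simp only [List.cons_append, cyc_cons, List.append_assoc, List.cons_append]
      rw [pprod_split g b a s' (t ++ (a :: (u ++ [b]))), pprod_split g a a t (u ++ [b]),
        pprod_split g b a s' (u ++ [b])]
      ring

lemma NeCyc_split (a : Fin n) (s t u : List (Fin n))
    (h : NeCyc (s ++ a :: t ++ a :: u)) : NeCyc (a :: t) ∧ NeCyc (s ++ a :: u) := by
  cases s with
  | nil =>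
      simp only [List.nil_append, NeCyc_cons, List.append_assoc, List.cons_append,
        List.nil_append] at h ⊢
      change List.IsChain _ (a :: (t ++ a :: (u ++ [a]))) at h
      rw [List.isChain_cons_split] at h
      exact ⟨h.1, h.2⟩
  | cons b s' =>
      simp only [List.cons_append, NeCyc_cons, List.append_assoc, List.cons_append] at h ⊢
      change List.IsChain _ (b :: (s' ++ a :: (t ++ a :: (u ++ [b])))) at h
      rw [List.isChain_cons_split] at h
      obtain ⟨h1, h2⟩ := h
      rw [List.isChain_cons_split] at h2
      exact ⟨h2.1, List.isChain_cons_split.mpr ⟨h1, h2.2⟩⟩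

lemma exists_dup : ∀ (l : List (Fin n)), ¬ l.Nodup →
    ∃ (a : Fin n) (s t u : List (Fin n)), l = s ++ a :: t ++ a :: u := by
  intro l
  induction l with
  | nil => intro h; exact absurd List.nodup_nil h
  | cons x xs ih =>
      intro h
      rw [List.nodup_cons] at h
      push_neg at h
      by_cases hx : x ∈ xs
      · obtain ⟨t, u, rfl⟩ := List.mem_iff_append.mp hx
        exact ⟨x, [], t, u, rfl⟩
      · obtain ⟨a, s, t, u, rfl⟩ := ih (h hx)
        exact ⟨a, x :: s, t, u, rfl⟩

end KacAux
namespace KacAux2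
open KacAux

variable {n : ℕ}

lemma castSucc_add_one {k : ℕ} (t : Fin k) : (t.castSucc : Fin (k+1)) + 1 = t.succ := by
  have hk : 0 < k := t.pos
  ext
  have h1 : (1:ℕ) % (k+1) = 1 := Nat.mod_eq_of_lt (by omega)
  rw [Fin.val_add, Fin.coe_castSucc, Fin.val_succ, Fin.val_one', h1,
    Nat.mod_eq_of_lt (by have := t.isLt; omega)]

lemma bridge1 (g : Fin n → Fin n → ℚ) :
    ∀ (k : ℕ) (j : Fin (k+1) → Fin n) (b : Fin n),
    pprod g (j 0) (List.ofFn (fun t : Fin k => j t.succ) ++ [b]) =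
      (∏ t : Fin k, g (j t.castSucc) (j t.succ)) * g (j (Fin.last k)) b := by
  intro k
  induction k with
  | zero =>
      intro j b
      simp [Fin.last]
  | succ k ih =>
      intro j b
      rw [List.ofFn_succ]
      simp only [List.cons_append, pprod_cons]
      have key := ih (fun s : Fin (k+1) => j s.succ) b
      rw [key]
      rw [Fin.prod_univ_succ (fun t : Fin (k+1) => g (j t.castSucc) (j t.succ))]
      simp only [Fin.castSucc_zero, Fin.succ_castSucc, Fin.succ_last]
      ring

lemma bridge (g : Fin n → Fin n → ℚ) (k : ℕ) (i : Fin (k+1) → Fin n) :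
    cyc g (List.ofFn i) = ∏ s : Fin (k+1), g (i s) (i (s+1)) := by
  rw [List.ofFn_succ, cyc_cons, bridge1 g k i (i 0)]
  rw [Fin.prod_univ_castSucc (f := fun s : Fin (k+1) => g (i s) (i (s+1)))]
  congr 1
  · exact Finset.prod_congr rfl fun t _ => by rw [castSucc_add_one]
  · rw [Fin.last_add_one]

/-- The matrix entries as rationals. -/
def Bq (A : Matrix (Fin n) (Fin n) ℤ) : Fin n → Fin n → ℚ := fun i j => (A i j : ℚ)

lemma cyc_eq (A : Matrix (Fin n) (Fin n) ℤ)
    (hyp : ∀ m : ℕ, m + 2 ≤ n → ∀ i : Fin (m + 2) → Fin n, (∀ s, i s ≠ i (s + 1)) →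
        (∏ s, A (i s) (i (s + 1))) = ∏ s, A (i (s + 1)) (i s)) :
    ∀ (N : ℕ) (c : List (Fin n)), c.length ≤ N → NeCyc c →
      cyc (Bq A) c = cyc (fun a b => Bq A b a) c := by
  intro N
  induction N with
  | zero =>
      intro c hc _
      rw [List.length_eq_zero_iff.mp (Nat.le_zero.mp hc)]
      simp
  | succ N ih =>
      intro c hc hne
      by_cases hd : c.Nodup
      · rcases c with _ | ⟨x, _ | ⟨y, l'⟩⟩
        · rfl
        · exact absurd rfl (List.chain_cons.mp hne).1
        · have hlen : (x :: y :: l').length = l'.length + 2 := by simp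
          have hn : l'.length + 2 ≤ n := by
            have h := hd.length_le_card
            rw [hlen] at h
            simpa using h
          set m := l'.length with hm
          set i : Fin (m+2) → Fin n := fun s => (x :: y :: l').get (Fin.cast hlen.symm s) with hi
          have hofn : List.ofFn i = x :: y :: l' := by
            apply List.ext_get (by simp [hlen])
            intro idx h1 h2
            simp [hi, List.get_ofFn]
            rcases idx with _ | _ | idx <;> simp
          have hinj : Function.Injective i := by
            intro s t hst
            have h3 := List.nodup_iff_injective_get.mp hd hst
            have : (Fin.cast hlen.symm s : Fin _) = Fin.cast hlen.symm t := h3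
            exact Fin.ext (congrArg Fin.val this)
          have hne' : ∀ s : Fin (m+2), i s ≠ i (s+1) := by
            intro s h
            have h2 : s = s + 1 := hinj h
            have h3 : s + 0 = s + 1 := by rw [add_zero]; exact h2
            exact one_ne_zero ((add_left_cancel h3).symm)
          have hz := hyp m hn i hne'
          have hq : (∏ s, Bq A (i s) (i (s+1))) = ∏ s, Bq A (i (s+1)) (i s) := by
            unfold Bq
            exact_mod_cast hz
          rw [← hofn, bridge (Bq A) (m+1) i, bridge _ (m+1) i]
          exact hq
      · obtain ⟨a, s, t, u, rfl⟩ := exists_dup _ hd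
        obtain ⟨h1, h2⟩ := NeCyc_split a s t u hne
        have l1 : (a :: t).length ≤ N := by simp at hc ⊢; omega
        have l2 : (s ++ a :: u).length ≤ N := by simp at hc ⊢; omega
        rw [cyc_split, cyc_split, ih _ l1 h1, ih _ l2 h2]

end KacAux2
namespace KacAux3
open KacAux KacAux2

variable {n : ℕ}

lemma head_congr {l l' : List (Fin n)} (h : l = l') (hl : l ≠ []) (hl' : l' ≠ []) :
    l.head hl = l'.head hl' := by subst h; rfl

lemma getLast_congr {l l' : List (Fin n)} (h : l = l') (hl : l ≠ []) (hl' : l' ≠ []) :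
    l.getLast hl = l'.getLast hl' := by subst h; rfl

/-- Adjacency: distinct vertices joined by a nonzero entry. -/
def SRel (A : Matrix (Fin n) (Fin n) ℤ) (a b : Fin n) : Prop := a ≠ b ∧ A a b ≠ 0

/-- Edge ratio. -/
def fq (A : Matrix (Fin n) (Fin n) ℤ) (a b : Fin n) : ℚ := (A a b : ℚ) / (A b a : ℚ)

/-- Value of a walk given as a full vertex list. -/
def vP (g : Fin n → Fin n → ℚ) : List (Fin n) → ℚ
  | [] => 1
  | x :: l => pprod g x l

@[simp] lemma vP_nil (g : Fin n → Fin n → ℚ) : vP g [] = 1 := rfl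

@[simp] lemma vP_cons (g : Fin n → Fin n → ℚ) (x : Fin n) (l : List (Fin n)) :
    vP g (x :: l) = pprod g x l := rfl

variable {A : Matrix (Fin n) (Fin n) ℤ}

lemma nz_symm (hA : IsGCM A) {a b : Fin n} (h : A a b ≠ 0) : A b a ≠ 0 :=
  fun h0 => h (hA.2.2 b a h0)

lemma SRel_symm (hA : IsGCM A) {a b : Fin n} (h : SRel A a b) : SRel A b a :=
  ⟨h.1.symm, nz_symm hA h.2⟩

lemma fq_ne_zero (hA : IsGCM A) {a b : Fin n} (h : SRel A a b) : fq A a b ≠ 0 :=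
  div_ne_zero (Int.cast_ne_zero.2 h.2) (Int.cast_ne_zero.2 (nz_symm hA h.2))

lemma fq_mul (hA : IsGCM A) {a b : Fin n} (h : SRel A a b) : fq A a b * fq A b a = 1 := by
  unfold fq
  rw [div_mul_div_comm, mul_comm ((A a b : ℚ))]
  exact div_self (mul_ne_zero (Int.cast_ne_zero.2 (nz_symm hA h.2)) (Int.cast_ne_zero.2 h.2))

lemma vP_append (g : Fin n → Fin n → ℚ) {c m : List (Fin n)} (hc : c ≠ []) (hm : m ≠ []) :
    vP g (c ++ m) = vP g c * g (c.getLast hc) (m.head hm) * vP g m := by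
  obtain ⟨x, l, rfl⟩ : ∃ x l, c = x :: l := by
    cases c with
    | nil => exact absurd rfl hc
    | cons x l => exact ⟨x, l, rfl⟩
  obtain ⟨y, q, rfl⟩ : ∃ y q, m = y :: q := by
    cases m with
    | nil => exact absurd rfl hm
    | cons y q => exact ⟨y, q, rfl⟩
  show pprod g x (l ++ y :: q) = _
  rw [pprod_split g x y l q, pprod_concat]
  rfl

lemma vP_reverse (g : Fin n → Fin n → ℚ) : ∀ l : List (Fin n),
    vP g l.reverse = vP (flip g) l := by
  intro l
  induction l with
  | nil => rfl
  | cons x l ih =>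
      cases l with
      | nil => rfl
      | cons y q =>
          have h1 : (y :: q).reverse ≠ [] := by simp
          rw [List.reverse_cons, vP_append g h1 (by simp : ([x] : List (Fin n)) ≠ [])]
          rw [ih, List.getLast_reverse]
          show _ * g y x * 1 = flip g x y * pprod (flip g) y q
          show _ * g y x * 1 = g y x * pprod (flip g) y q
          rw [mul_one]
          show vP (flip g) (y :: q) * g y x = _
          rw [vP_cons]
          ring

lemma vP_mul_flip (hA : IsGCM A) : ∀ l : List (Fin n), List.Chain' (SRel A) l →
    vP (fq A) l * vP (flip (fq A)) l = 1 := by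
  intro l
  induction l with
  | nil => simp
  | cons x l ih =>
      cases l with
      | nil => simp [pprod]
      | cons y q =>
          intro h
          change List.IsChain _ (x :: y :: q) at h
          rw [List.isChain_cons_cons] at h
          have hxy := h.1
          have hrest := ih h.2
          rw [vP_cons, vP_cons, pprod_cons, pprod_cons]
          have hflip : flip (fq A) x y = fq A y x := rfl
          rw [hflip]
          calc fq A x y * pprod (fq A) y q * (fq A y x * pprod (flip (fq A)) y q)
              = (fq A x y * fq A y x) *
                (vP (fq A) (y :: q) * vP (flip (fq A)) (y :: q)) := by
                rw [vP_cons, vP_cons]; ring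
            _ = 1 := by rw [fq_mul hA hxy, hrest, one_mul]

lemma vP_ne_zero (hA : IsGCM A) {l : List (Fin n)} (h : List.Chain' (SRel A) l) :
    vP (fq A) l ≠ 0 :=
  left_ne_zero_of_mul_eq_one (vP_mul_flip hA l h)

/-- The value of a closed walk is 1. -/
lemma vP_closed (hA : IsGCM A)
    (hyp : ∀ m : ℕ, m + 2 ≤ n → ∀ i : Fin (m + 2) → Fin n, (∀ s, i s ≠ i (s + 1)) →
        (∏ s, A (i s) (i (s + 1))) = ∏ s, A (i (s + 1)) (i s)) :
    ∀ (c : List (Fin n)) (hc : c ≠ []), List.Chain' (SRel A) c →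
      c.getLast hc = c.head hc → vP (fq A) c = 1 := by
  intro c hc hch hcl
  obtain ⟨x, l, rfl⟩ : ∃ x l, c = x :: l := by
    cases c with
    | nil => exact absurd rfl hc
    | cons x l => exact ⟨x, l, rfl⟩
  cases l with
  | nil => rfl
  | cons y q =>
      have hl : (y :: q : List (Fin n)) ≠ [] := by simp
      have hx : (y :: q).getLast hl = x := by
        rw [← List.getLast_cons (a := x) hl]
        exact hcl
      have hdecomp : y :: q = (y :: q).dropLast ++ [x] := by
        conv_lhs => rw [← List.dropLast_append_getLast hl]
        rw [hx]
      set L := (y :: q).dropLast with hL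
      have hch2 : List.Chain (SRel A) x (L ++ [x]) := by
        rw [← hdecomp]
        exact hch
      have hNe : NeCyc (x :: L) := List.IsChain.imp (fun a b hab => hab.1) hch2
      have heq := cyc_eq A hyp (x :: L).length (x :: L) le_rfl hNe
      rw [cyc_cons, cyc_cons] at heq
      have hnz : pprod (fun a b => Bq A b a) x (L ++ [x]) ≠ 0 := by
        apply pprod_ne_zero
        refine List.IsChain.imp (fun a b hab => ?_) hch2
        show (A b a : ℚ) ≠ 0
        exact Int.cast_ne_zero.2 (nz_symm hA hab.2)
      have hfq : fq A = fun a b => Bq A a b / (fun a b => Bq A b a) a b := rfl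
      rw [vP_cons, hdecomp]
      rw [hfq, pprod_div (Bq A) (fun a b => Bq A b a) x (L ++ [x])]
      rw [heq]
      exact div_self hnz

/-- `Wv A r j v` : there is a walk from `r` to `j` with value `v`. -/
def Wv (A : Matrix (Fin n) (Fin n) ℤ) (r j : Fin n) (v : ℚ) : Prop :=
  ∃ (c : List (Fin n)) (hc : c ≠ []), List.Chain' (SRel A) c ∧ c.head hc = r ∧
    c.getLast hc = j ∧ vP (fq A) c = v

lemma Wv_refl (A : Matrix (Fin n) (Fin n) ℤ) (j : Fin n) : Wv A j j 1 :=
  ⟨[j], by simp, List.isChain_singleton j, rfl, rfl, rfl⟩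

lemma Wv_ne_zero (hA : IsGCM A) {r j : Fin n} {v : ℚ} (h : Wv A r j v) : v ≠ 0 := by
  obtain ⟨c, hc, hch, _, _, hv⟩ := h
  rw [← hv]
  exact vP_ne_zero hA hch

lemma head_append_ne {c : List (Fin n)} (m : List (Fin n)) (hc : c ≠ []) :
    (c ++ m).head (by simp [hc]) = c.head hc := by
  cases c with
  | nil => exact absurd rfl hc
  | cons x l => rfl

lemma getLast_append_ne (c : List (Fin n)) {m : List (Fin n)} (hm : m ≠ []) :
    (c ++ m).getLast (by simp [hm]) = m.getLast hm := by
  rw [List.getLast_append, dif_neg]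
  intro h
  exact hm (List.isEmpty_iff.mp h)

lemma Wv_tail (hA : IsGCM A) {r a b : Fin n} {v : ℚ} (h : Wv A r a v) (hS : SRel A a b) :
    Wv A r b (v * fq A a b) := by
  obtain ⟨c, hc, hch, hhead, hlast, hv⟩ := h
  refine ⟨c ++ [b], by simp, ?_, ?_, ?_, ?_⟩
  · change List.IsChain _ _
    rw [List.isChain_append]
    refine ⟨hch, List.isChain_singleton b, ?_⟩
    intro x hx y hy
    rw [List.getLast?_eq_getLast hc, Option.mem_def, Option.some.injEq] at hx
    rw [List.head?_cons, Option.mem_def, Option.some.injEq] at hy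
    rw [← hx, ← hy, hlast]
    exact hS
  · rw [head_append_ne _ hc]; exact hhead
  · exact List.getLast_concat (l := c)
  · rw [vP_append (fq A) hc (by simp : ([b] : List (Fin n)) ≠ [])]
    show vP (fq A) c * fq A (c.getLast hc) b * 1 = v * fq A a b
    rw [hv, hlast, mul_one]

/-- Walk values between the same endpoints agree. -/
lemma Wv_unique (hA : IsGCM A)
    (hyp : ∀ m : ℕ, m + 2 ≤ n → ∀ i : Fin (m + 2) → Fin n, (∀ s, i s ≠ i (s + 1)) →
        (∏ s, A (i s) (i (s + 1))) = ∏ s, A (i (s + 1)) (i s))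
    {r j : Fin n} {v v' : ℚ} (h1 : Wv A r j v) (h2 : Wv A r j v') : v = v' := by
  obtain ⟨c, hc, hcch, hchead, hclast, hcv⟩ := h1
  obtain ⟨e, he, hech, hehead, helast, hev⟩ := h2
  by_cases hd0 : e.dropLast = []
  · -- e is a single vertex, so r = j and c is a closed walk
    obtain ⟨z, rfl⟩ : ∃ z, e = [z] := by
      cases e with
      | nil => exact absurd rfl he
      | cons x l =>
          cases l with
          | nil => exact ⟨x, rfl⟩
          | cons y q => simp at hd0
    have hrj : r = j := by rw [← hehead, ← helast]; rfl
    have hv' : v' = 1 := by rw [← hev]; rfl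
    have hv1 : v = 1 := by
      rw [← hcv]
      exact vP_closed hA hyp c hc hcch (by rw [hclast, hchead, hrj])
    rw [hv1, hv']
  · -- main case
    have hdl : e.dropLast ++ [j] = e := by
      conv_rhs => rw [← List.dropLast_append_getLast he]
      rw [helast]
    set D := e.dropLast with hD
    have hDch : List.Chain' (SRel A) D := by
      have h5 := hech
      rw [← hdl] at h5
      exact h5.left_of_append
    have hjunc : SRel A (D.getLast hd0) j := by
      have h3 := hech
      rw [← hdl] at h3
      change List.IsChain _ _ at h3
      rw [List.isChain_append] at h3
      exact h3.2.2 (D.getLast hd0)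
        (by rw [List.getLast?_eq_getLast hd0]; rfl) j (by simp)
    have hDrev : List.Chain' (SRel A) D.reverse := by
      change List.IsChain _ _
      rw [List.isChain_reverse]
      exact List.IsChain.imp (fun a b hab => SRel_symm hA hab) hDch
    have hDrevne : D.reverse ≠ [] := by simp [hd0]
    have hech2 : List.Chain' (SRel A) (c ++ D.reverse) := by
      change List.IsChain _ _
      rw [List.isChain_append]
      refine ⟨hcch, hDrev, ?_⟩
      intro x hx y hy
      rw [List.getLast?_eq_getLast hc, Option.mem_def, Option.some.injEq] at hx
      rw [List.head?_reverse, List.getLast?_eq_getLast hd0, Option.mem_def,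
        Option.some.injEq] at hy
      rw [← hx, ← hy, hclast]
      exact SRel_symm hA hjunc
    have hhead2 : (c ++ D.reverse).head (by simp [hc]) = r := by
      rw [head_append_ne _ hc]; exact hchead
    have hlast2 : (c ++ D.reverse).getLast (by simp [hDrevne]) = r := by
      rw [getLast_append_ne c hDrevne, List.getLast_reverse]
      have hDhead : D.head hd0 = e.head he := by
        refine Eq.trans ?_ (head_congr hdl (by simp [hd0]) he)
        exact (head_append_ne [j] hd0).symm
      rw [hDhead, hehead]
    have hclosed0 := vP_closed hA hyp (c ++ D.reverse) (by simp [hc]) hech2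
      (by rw [hlast2, hhead2])
    have hclosed : v * fq A j (D.getLast hd0) * vP (flip (fq A)) D = 1 := by
      rw [vP_append (fq A) hc hDrevne, List.head_reverse, hcv, hclast,
        vP_reverse] at hclosed0
      exact hclosed0
    have hv'eq : v' = vP (fq A) D * fq A (D.getLast hd0) j := by
      rw [← hev, ← hdl, vP_append (fq A) hd0 (by simp : ([j] : List (Fin n)) ≠ [])]
      show vP (fq A) D * fq A (D.getLast hd0) (([j] : List (Fin n)).head (by simp)) * 1 = _
      rw [mul_one]
      rfl
    have hWW : vP (fq A) D * vP (flip (fq A)) D = 1 := vP_mul_flip hA D hDch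
    have hff : fq A (D.getLast hd0) j * fq A j (D.getLast hd0) = 1 := fq_mul hA hjunc
    calc v = v * ((fq A j (D.getLast hd0) * vP (flip (fq A)) D) *
              (fq A (D.getLast hd0) j * vP (fq A) D)) := by
            rw [show (fq A j (D.getLast hd0) * vP (flip (fq A)) D) *
                (fq A (D.getLast hd0) j * vP (fq A) D) =
                (fq A (D.getLast hd0) j * fq A j (D.getLast hd0)) *
                (vP (fq A) D * vP (flip (fq A)) D) by ring, hff, hWW, one_mul, mul_one]
      _ = (v * fq A j (D.getLast hd0) * vP (flip (fq A)) D) *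
            (fq A (D.getLast hd0) j * vP (fq A) D) := by ring
      _ = fq A (D.getLast hd0) j * vP (fq A) D := by rw [hclosed, one_mul]
      _ = v' := by rw [hv'eq]; ring

end KacAux3
namespace KacAux4
open KacAux KacAux2 KacAux3

variable {n : ℕ} {A : Matrix (Fin n) (Fin n) ℤ}

lemma min'_congr {s t : Finset (Fin n)} (h : s = t) (hs : s.Nonempty) (ht : t.Nonempty) :
    s.min' hs = t.min' ht := by subst h; rfl

lemma exists_symmetrizer (hA : IsGCM A)
    (hyp : ∀ m : ℕ, m + 2 ≤ n → ∀ i : Fin (m + 2) → Fin n, (∀ s, i s ≠ i (s + 1)) →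
        (∏ s, A (i s) (i (s + 1))) = ∏ s, A (i (s + 1)) (i s)) :
    IsSymmetrizable A := by
  classical
  have hrefl : ∀ j : Fin n, ∃ v, Wv A j j v := fun j => ⟨1, Wv_refl A j⟩
  have hstep : ∀ (a b k : Fin n), (∃ v, Wv A k a v) → SRel A a b → ∃ v, Wv A k b v :=
    fun a b k ⟨v, hv⟩ hS => ⟨v * fq A a b, Wv_tail hA hv hS⟩
  set cls : Fin n → Finset (Fin n) :=
    fun j => Finset.univ.filter (fun k => ∃ v, Wv A k j v) with hcls
  have hne : ∀ j, (cls j).Nonempty := fun j => ⟨j, by simp [hcls]; exact hrefl j⟩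
  have hcls_eq : ∀ a b, SRel A a b → cls a = cls b := by
    intro a b hS
    apply Finset.ext
    intro k
    simp only [hcls, Finset.mem_filter, Finset.mem_univ, true_and]
    exact ⟨fun h => hstep a b k h hS, fun h => hstep b a k h (SRel_symm hA hS)⟩
  set root : Fin n → Fin n := fun j => (cls j).min' (hne j) with hrootdef
  have hroot : ∀ j, ∃ v, Wv A (root j) j v := by
    intro j
    have h : root j ∈ cls j := Finset.min'_mem (cls j) (hne j)
    rw [hcls] at h
    simp only [Finset.mem_filter, Finset.mem_univ, true_and] at h
    exact h
  choose d hd using hroot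
  have hd0 : ∀ j, d j ≠ 0 := fun j => Wv_ne_zero hA (hd j)
  refine ⟨d, hd0, ?_⟩
  intro a b
  by_cases hab : a = b
  · subst hab; rfl
  by_cases h0 : A a b = 0
  · have h0' : A b a = 0 := hA.2.2 _ _ h0
    rw [h0, h0']
    push_cast
    ring
  · have hS : SRel A a b := ⟨hab, h0⟩
    have hr : root a = root b := by
      rw [hrootdef]
      exact min'_congr (hcls_eq a b hS) (hne a) (hne b)
    have hWb : Wv A (root a) b (d a * fq A a b) := Wv_tail hA (hd a) hS
    have hWb' : Wv A (root a) b (d b) := by rw [hr]; exact hd b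
    have heq : d b = d a * fq A a b := Wv_unique hA hyp hWb' hWb
    have hba : (A b a : ℚ) ≠ 0 := Int.cast_ne_zero.mpr (nz_symm hA h0)
    rw [heq]
    show d a * (A a b : ℚ) = d a * ((A a b : ℚ) / (A b a : ℚ)) * (A b a : ℚ)
    field_simp

end KacAux4

/-- Kac's criterion: a GCM is symmetrizable iff for every `k` with `2 ≤ k ≤ n` (here
`k = m + 2`) and every sequence `i : Fin k → Fin n` with `i s ≠ i (s+1)` (indices mod `k`),
`A (i 1) (i 2) ⋯ A (i k) (i 1) = A (i 2) (i 1) ⋯ A (i 1) (i k)`. -/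
theorem symmetrizable_iff_kac_criterion {n : ℕ} (A : Matrix (Fin n) (Fin n) ℤ)
    (hA : IsGCM A) :
    IsSymmetrizable A ↔
      ∀ m : ℕ, m + 2 ≤ n → ∀ i : Fin (m + 2) → Fin n,
        (∀ s, i s ≠ i (s + 1)) →
        (∏ s, A (i s) (i (s + 1))) = ∏ s, A (i (s + 1)) (i s) := by
  constructor
  · rintro ⟨d, hd0, hd⟩ m hmn i hne
    have h1 : (∏ s : Fin (m+2), d (i s)) * (∏ s : Fin (m+2), (A (i s) (i (s+1)) : ℚ)) =
        (∏ s : Fin (m+2), d (i (s+1))) * ∏ s : Fin (m+2), (A (i (s+1)) (i s) : ℚ) := by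
      rw [← Finset.prod_mul_distrib, ← Finset.prod_mul_distrib]
      exact Finset.prod_congr rfl fun s _ => hd (i s) (i (s+1))
    have h2 : (∏ s : Fin (m+2), d (i (s+1))) = ∏ s : Fin (m+2), d (i s) :=
      Fintype.prod_equiv (Equiv.addRight (1 : Fin (m+2))) _ _ (fun s => rfl)
    rw [h2] at h1
    have hprod_ne : (∏ s : Fin (m+2), d (i s)) ≠ 0 :=
      Finset.prod_ne_zero_iff.mpr fun s _ => hd0 _
    have h3 : (∏ s : Fin (m+2), (A (i s) (i (s+1)) : ℚ)) =
        ∏ s : Fin (m+2), (A (i (s+1)) (i s) : ℚ) := mul_left_cancel₀ hprod_ne h1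
    exact_mod_cast h3
  · exact fun hyp => KacAux4.exists_symmetrizer hA hyp
end

section
/- Let A be an n×n generalized Cartan matrix. Then A is symmetrizable if and only if every cycle in the Dynkin diagram graph of A is balanced, i.e., for every sequence of distinct vertices i_1, …, i_k (k ≥ 3) with i_s adjacent to i_{s+1} for 1 ≤ s < k and i_k adjacent to i_1, the product over s (mod k) of the ratios A(i_{s+1}, i_s) / A(i_s, i_{s+1}) equals 1. -/
/-- The Dynkin diagram graph of a GCM: `i` adjacent to `j` iff `i ≠ j` and `A i j ≠ 0`.
(For a GCM, `A i j ≠ 0 ↔ A j i ≠ 0`, so adjacency is stated symmetrically.) -/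
def dynkinGraph {ι : Type} (A : Matrix ι ι ℤ) : SimpleGraph ι where
  Adj i j := i ≠ j ∧ A i j ≠ 0 ∧ A j i ≠ 0
  symm := ⟨by intro i j h; exact ⟨h.1.symm, h.2.2, h.2.1⟩⟩
  loopless := ⟨by intro i h; exact h.1 rfl⟩

namespace CartanBalanced

open SimpleGraph List Finset

variable {n : ℕ} (A : Matrix (Fin n) (Fin n) ℤ)

/-- edge weight -/
noncomputable def ew (u v : Fin n) : ℚ := (A u v : ℚ) / (A v u : ℚ)

lemma ew_ne_zero {u v : Fin n} (h : (dynkinGraph A).Adj u v) : ew A u v ≠ 0 := by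
  have h1 : (A u v : ℚ) ≠ 0 := by exact_mod_cast h.2.1
  have h2 : (A v u : ℚ) ≠ 0 := by exact_mod_cast h.2.2
  exact div_ne_zero h1 h2

lemma ew_mul_ew {u v : Fin n} (h : (dynkinGraph A).Adj u v) : ew A u v * ew A v u = 1 := by
  have h1 : (A u v : ℚ) ≠ 0 := by exact_mod_cast h.2.1
  have h2 : (A v u : ℚ) ≠ 0 := by exact_mod_cast h.2.2
  rw [ew, ew, div_mul_div_comm, mul_comm (A v u : ℚ), div_self (mul_ne_zero h1 h2)]

/-- weight of a walk -/
noncomputable def wt {u v : Fin n} (p : (dynkinGraph A).Walk u v) : ℚ :=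
  (p.darts.map (fun d => ew A d.toProd.1 d.toProd.2)).prod

@[simp] lemma wt_nil {u : Fin n} : wt A (.nil : (dynkinGraph A).Walk u u) = 1 := rfl

lemma wt_cons {u v x : Fin n} (h : (dynkinGraph A).Adj u v) (p : (dynkinGraph A).Walk v x) :
    wt A (.cons h p) = ew A u v * wt A p := by
  simp [wt]

lemma wt_append {u v x : Fin n} (p : (dynkinGraph A).Walk u v) (q : (dynkinGraph A).Walk v x) :
    wt A (p.append q) = wt A p * wt A q := by
  simp [wt, SimpleGraph.Walk.darts_append]

lemma wt_ne_zero {u v : Fin n} (p : (dynkinGraph A).Walk u v) : wt A p ≠ 0 := by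
  induction p with
  | nil => simp
  | cons h q ih => rw [wt_cons]; exact mul_ne_zero (ew_ne_zero A h) ih

lemma wt_reverse_mul {u v : Fin n} (p : (dynkinGraph A).Walk u v) :
    wt A p.reverse * wt A p = 1 := by
  induction p with
  | nil => simp
  | @cons a b c h q ih =>
    rw [SimpleGraph.Walk.reverse_cons, wt_append, wt_cons, wt_cons, wt_nil, mul_one]
    calc wt A q.reverse * ew A b a * (ew A a b * wt A q)
        = (ew A b a * ew A a b) * (wt A q.reverse * wt A q) := by ring
      _ = 1 := by rw [ih, ew_mul_ew A h.symm, one_mul]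

lemma wt_eq_prod {u v : Fin n} (p : (dynkinGraph A).Walk u v) :
    wt A p = ∏ s ∈ Finset.range p.length, ew A (p.getVert s) (p.getVert (s + 1)) := by
  induction p with
  | nil => simp
  | cons h q ih =>
    rw [wt_cons, ih, SimpleGraph.Walk.length_cons, Finset.prod_range_succ']
    simp only [SimpleGraph.Walk.getVert_cons_succ, SimpleGraph.Walk.getVert_zero]
    rw [mul_comm]

lemma support_eq_map {u v : Fin n} (p : (dynkinGraph A).Walk u v) :
    p.support = (List.range (p.length + 1)).map p.getVert := by
  induction p with
  | nil => simp [List.range_succ, SimpleGraph.Walk.getVert_zero]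
  | @cons a b c h q ih =>
    rw [SimpleGraph.Walk.support_cons, ih, SimpleGraph.Walk.length_cons]
    conv_rhs => rw [List.range_succ_eq_map]
    simp [List.map_map, Function.comp_def, SimpleGraph.Walk.getVert_cons_succ,
      SimpleGraph.Walk.getVert_zero]

/-- every closed walk has weight 1, assuming balanced cycles -/
lemma wt_closed (_hA : IsGCM A)
    (hbal : ∀ (m : ℕ) (i : Fin (m + 3) → Fin n), Function.Injective i →
        (∀ s, (dynkinGraph A).Adj (i s) (i (s + 1))) →
        (∏ s, ((A (i (s + 1)) (i s) : ℚ) / (A (i s) (i (s + 1)) : ℚ))) = 1) :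
    ∀ (N : ℕ) (u : Fin n) (p : (dynkinGraph A).Walk u u), p.length ≤ N → wt A p = 1 := by
  intro N
  induction N with
  | zero =>
    intro u p hp
    cases p with
    | nil => simp
    | cons h q => simp [SimpleGraph.Walk.length_cons] at hp
  | succ N ih =>
    intro u p hp
    by_cases hnd : p.support.tail.Nodup
    · -- no repeated interior vertex
      have hw := wt_eq_prod A p
      rcases Nat.lt_or_ge p.length 3 with h3 | h3
      · have h0 : p.length = 0 ∨ p.length = 1 ∨ p.length = 2 := by omega
        rcases h0 with h0 | h0 | h0
        · rw [hw, h0]; simp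
        · exfalso
          have hadj := p.adj_getVert_succ (i := 0) (by omega)
          rw [SimpleGraph.Walk.getVert_zero] at hadj
          have h1 : p.getVert 1 = u := by
            have h2 := p.getVert_length; rw [h0] at h2; exact h2
          rw [h1] at hadj
          exact hadj.1 rfl
        · rw [hw, h0, Finset.prod_range_succ, Finset.prod_range_one]
          have hv2 : p.getVert 2 = u := by
            have h2 := p.getVert_length; rw [h0] at h2; exact h2
          rw [hv2, SimpleGraph.Walk.getVert_zero]
          have hadj := p.adj_getVert_succ (i := 0) (by omega)
          rw [SimpleGraph.Walk.getVert_zero] at hadj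
          exact ew_mul_ew A hadj
      · -- genuine cycle : use the balance hypothesis
        obtain ⟨m, hm⟩ : ∃ m, p.length = m + 3 := ⟨p.length - 3, by omega⟩
        have htail : p.support.tail
            = (List.range (m + 3)).map (fun s => p.getVert (s + 1)) := by
          rw [support_eq_map, hm, List.range_succ_eq_map, List.map_cons, List.tail_cons,
            List.map_map]
          simp [Function.comp_def]
        rw [htail] at hnd
        have hinj2 := List.inj_on_of_nodup_map hnd
        have hgv0 : p.getVert (m + 3) = u := by
          have h2 := p.getVert_length; rw [hm] at h2; exact h2
        set i : Fin (m + 3) → Fin n := fun s => p.getVert s.val with hidef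
        have hival : ∀ s : Fin (m + 3),
            p.getVert s.val = p.getVert ((if s.val = 0 then m + 2 else s.val - 1) + 1) := by
          intro s
          by_cases h0 : s.val = 0
          · rw [h0, if_pos rfl, show m + 2 + 1 = m + 3 from rfl,
              SimpleGraph.Walk.getVert_zero, hgv0]
          · rw [if_neg h0, show s.val - 1 + 1 = s.val by omega]
        have hinj : Function.Injective i := by
          intro s t hst
          have hst' : p.getVert s.val = p.getVert t.val := hst
          rw [hival s, hival t] at hst'
          have hs := s.isLt; have ht := t.isLt
          have hmem : ∀ a : ℕ, a < m + 3 →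
              (if a = 0 then m + 2 else a - 1) ∈ List.range (m + 3) := by
            intro a ha; apply List.mem_range.mpr; split <;> omega
          have := hinj2 (hmem s.val hs) (hmem t.val ht) hst'
          apply Fin.ext
          split_ifs at this <;> omega
        have hgvcyc : ∀ s : Fin (m + 3), i (s + 1) = p.getVert (s.val + 1) := by
          intro s
          have hval : ((s + 1 : Fin (m + 3))).val = (s.val + 1) % (m + 3) := by
            rw [Fin.add_def]; congr 1
          show p.getVert ((s + 1 : Fin (m + 3))).val = p.getVert (s.val + 1)
          rw [hval]
          by_cases hlast : s.val = m + 2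
          · rw [hlast, show (m + 2 + 1) % (m + 3) = 0 from Nat.mod_self (m + 3),
              SimpleGraph.Walk.getVert_zero, show m + 2 + 1 = m + 3 from rfl, hgv0]
          · rw [Nat.mod_eq_of_lt (by have := s.isLt; omega)]
        have hadj : ∀ s, (dynkinGraph A).Adj (i s) (i (s + 1)) := by
          intro s
          rw [hgvcyc s]
          exact p.adj_getVert_succ (by rw [hm]; exact s.isLt)
        have hb := hbal m i hinj hadj
        have hwt : wt A p = ∏ s : Fin (m + 3), ew A (i s) (i (s + 1)) := by
          rw [hw, hm,
            ← Fin.prod_univ_eq_prod_range (fun s => ew A (p.getVert s) (p.getVert (s + 1)))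
              (m + 3)]
          exact Finset.prod_congr rfl (fun s _ => by rw [hgvcyc s])
        have hone : ∏ s : Fin (m + 3),
            (ew A (i s) (i (s + 1)) * ew A (i (s + 1)) (i s)) = 1 :=
          Finset.prod_eq_one (fun s _ => ew_mul_ew A (hadj s))
        rw [Finset.prod_mul_distrib] at hone
        have hb' : ∏ s : Fin (m + 3), ew A (i (s + 1)) (i s) = 1 := by
          rw [← hb]; exact Finset.prod_congr rfl (fun s _ => rfl)
        rw [hwt]
        rw [hb', mul_one] at hone
        exact hone
    · -- repeated interior vertex : rotate and split
      obtain ⟨x, hx⟩ := List.exists_duplicate_iff_not_nodup.mpr hnd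
      have hcount : 2 ≤ p.support.tail.count x := List.duplicate_iff_two_le_count.mp hx
      have hxs : x ∈ p.support := List.mem_of_mem_tail hx.mem
      have hrot : wt A (p.rotate x hxs) = wt A p :=
        List.Perm.prod_eq (List.Perm.map _ (SimpleGraph.Walk.rotate_darts p x hxs).perm)
      have hlenrot : (p.rotate x hxs).length = p.length := by
        have h2 := (SimpleGraph.Walk.rotate_darts p x hxs).perm.length_eq
        simpa [SimpleGraph.Walk.length_darts] using h2
      have hcount' : 2 ≤ (p.rotate x hxs).support.tail.count x := by
        rw [(SimpleGraph.Walk.support_rotate p x hxs).perm.count_eq x]; exact hcount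
      cases hc : p.rotate x hxs with
      | nil => rw [hc] at hcount'; simp at hcount'
      | @cons _ y _ h q =>
        rw [hc] at hcount' hlenrot hrot
        rw [SimpleGraph.Walk.support_cons, List.tail_cons] at hcount'
        have hxq : x ∈ q.support := List.count_pos_iff.mp (by omega)
        have hspec : (q.takeUntil x hxq).append (q.dropUntil x hxq) = q := q.take_spec hxq
        have hc1 : (q.takeUntil x hxq).support.count x = 1 :=
          SimpleGraph.Walk.count_support_takeUntil_eq_one q hxq
        have hsup := SimpleGraph.Walk.support_append (q.takeUntil x hxq) (q.dropUntil x hxq)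
        rw [hspec] at hsup
        have hcount2 : 1 ≤ (q.dropUntil x hxq).support.tail.count x := by
          rw [hsup, List.count_append, hc1] at hcount'; omega
        have hq2len : 1 ≤ (q.dropUntil x hxq).length := by
          have hne : (q.dropUntil x hxq).support.tail ≠ [] := by
            intro hnil; rw [hnil] at hcount2; simp at hcount2
          have hl : (q.dropUntil x hxq).support.tail.length = (q.dropUntil x hxq).length := by
            have := (q.dropUntil x hxq).length_support
            cases hsupp : (q.dropUntil x hxq).support with
            | nil => exact absurd hsupp (q.dropUntil x hxq).support_ne_nil
            | cons a l => rw [hsupp] at this; simp at this ⊢; omega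
          have := List.length_pos_iff.mpr hne
          omega
        have hlen : (q.takeUntil x hxq).length + (q.dropUntil x hxq).length = q.length := by
          have h2 := congrArg SimpleGraph.Walk.length hspec
          rwa [SimpleGraph.Walk.length_append] at h2
        have hplen : q.length + 1 = p.length := by
          simpa [SimpleGraph.Walk.length_cons] using hlenrot
        have e1 : wt A (SimpleGraph.Walk.cons h (q.takeUntil x hxq)) = 1 := by
          apply ih x
          rw [SimpleGraph.Walk.length_cons]
          omega
        have e2 : wt A (q.dropUntil x hxq) = 1 := by
          apply ih x
          omega
        rw [← hrot, wt_cons, ← hspec, wt_append, ← mul_assoc, ← wt_cons A h, e1, e2, one_mul]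

end CartanBalanced

/-- A GCM is symmetrizable iff every cycle in its Dynkin diagram graph is balanced:
for every sequence of distinct vertices `i 1, …, i k` (`k = m + 3 ≥ 3`) with consecutive
vertices adjacent (cyclically), the product of the multiplicities
`A (i (s+1)) (i s) / A (i s) (i (s+1))` is `1`. -/
theorem symmetrizable_iff_cycles_balanced {n : ℕ} (A : Matrix (Fin n) (Fin n) ℤ)
    (hA : IsGCM A) :
    IsSymmetrizable A ↔
      ∀ (m : ℕ) (i : Fin (m + 3) → Fin n), Function.Injective i →
        (∀ s, (dynkinGraph A).Adj (i s) (i (s + 1))) →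
        (∏ s, ((A (i (s + 1)) (i s) : ℚ) / (A (i s) (i (s + 1)) : ℚ))) = 1 := by
  classical
  constructor
  · rintro ⟨d, hd0, hd⟩ m i hinj hadj
    have hterm : ∀ s : Fin (m + 3),
        ((A (i (s + 1)) (i s) : ℚ) / (A (i s) (i (s + 1)) : ℚ))
          = d (i s) / d (i (s + 1)) := by
      intro s
      have h := hd (i s) (i (s + 1))
      have h1 : (A (i s) (i (s + 1)) : ℚ) ≠ 0 := by exact_mod_cast (hadj s).2.1
      have h2 : (A (i (s + 1)) (i s) : ℚ) ≠ 0 := by exact_mod_cast (hadj s).2.2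
      have h3 := hd0 (i s); have h4 := hd0 (i (s + 1))
      field_simp
      linear_combination -h
    rw [Finset.prod_congr rfl (fun s _ => hterm s), Finset.prod_div_distrib]
    have hre : ∏ s : Fin (m + 3), d (i (s + 1)) = ∏ s : Fin (m + 3), d (i s) :=
      Fintype.prod_equiv (Equiv.addRight 1) _ _ (fun s => rfl)
    rw [hre, div_self (Finset.prod_ne_zero_iff.mpr (fun s _ => hd0 (i s)))]
  · intro hbal
    have key : ∀ (u : Fin n) (p : (dynkinGraph A).Walk u u), CartanBalanced.wt A p = 1 :=
      fun u p => CartanBalanced.wt_closed A hA hbal p.length u p le_rfl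
    have samewt : ∀ (a b : Fin n) (p q : (dynkinGraph A).Walk a b),
        CartanBalanced.wt A p = CartanBalanced.wt A q := by
      intro a b p q
      have h1 := key a (p.append q.reverse)
      rw [CartanBalanced.wt_append] at h1
      have h2 := CartanBalanced.wt_reverse_mul A q
      calc CartanBalanced.wt A p
          = CartanBalanced.wt A p * (CartanBalanced.wt A q.reverse * CartanBalanced.wt A q) := by
            rw [h2, mul_one]
        _ = (CartanBalanced.wt A p * CartanBalanced.wt A q.reverse) * CartanBalanced.wt A q := by
            ring
        _ = CartanBalanced.wt A q := by rw [h1, one_mul]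
    have samewt2 : ∀ (a a' b : Fin n), a = a' → ∀ (p : (dynkinGraph A).Walk a b)
        (q : (dynkinGraph A).Walk a' b),
        CartanBalanced.wt A p = CartanBalanced.wt A q := by
      intro a a' b e
      subst e
      exact samewt a b
    have hreach : ∀ j : Fin n,
        (dynkinGraph A).Reachable (((dynkinGraph A).connectedComponentMk j).out) j :=
      fun j => SimpleGraph.ConnectedComponent.eq.mp (Quot.out_eq _)
    let wk : ∀ j : Fin n,
        (dynkinGraph A).Walk (((dynkinGraph A).connectedComponentMk j).out) j :=
      fun j => (hreach j).some
    refine ⟨fun j => CartanBalanced.wt A (wk j),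
      fun j => CartanBalanced.wt_ne_zero A _, ?_⟩
    intro a b
    by_cases hab : a = b
    · subst hab; rfl
    by_cases h0 : A a b = 0
    · have h0' : A b a = 0 := hA.2.2 a b h0
      rw [h0, h0']
      push_cast
      ring
    · have h1 : A b a ≠ 0 := fun hz => h0 (hA.2.2 b a hz)
      have hadj : (dynkinGraph A).Adj a b := ⟨hab, h0, h1⟩
      have hrep : ((dynkinGraph A).connectedComponentMk b).out
          = ((dynkinGraph A).connectedComponentMk a).out := by
        have hcc : (dynkinGraph A).connectedComponentMk b
            = (dynkinGraph A).connectedComponentMk a :=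
          SimpleGraph.ConnectedComponent.sound hadj.symm.reachable
        rw [hcc]
      have heq : CartanBalanced.wt A (wk b)
          = CartanBalanced.wt A ((wk a).concat hadj) :=
        samewt2 _ _ _ hrep (wk b) ((wk a).concat hadj)
      have hconc : CartanBalanced.wt A ((wk a).concat hadj)
          = CartanBalanced.wt A (wk a) * CartanBalanced.ew A a b := by
        rw [SimpleGraph.Walk.concat_eq_append, CartanBalanced.wt_append,
          CartanBalanced.wt_cons, CartanBalanced.wt_nil, mul_one]
      have hba : (A b a : ℚ) ≠ 0 := by exact_mod_cast h1
      show CartanBalanced.wt A (wk a) * (A a b : ℚ)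
          = CartanBalanced.wt A (wk b) * (A b a : ℚ)
      rw [heq, hconc, CartanBalanced.ew, mul_assoc, div_mul_cancel₀ _ hba]
end

section
/- Let A be a symmetrizable hyperbolic generalized Cartan matrix of rank n ≥ 3, and let d_1, …, d_n be positive rational numbers with d_i · A i j = d_j · A j i for all i, j. Then the set {d_1, …, d_n} has at most 4 distinct elements (equivalently, the real roots of the corresponding root system have at most 4 distinct lengths). -/
/-- The principal submatrix of `A` with rows and columns in `S`. -/
def matSub {ι : Type} (A : Matrix ι ι ℤ) (S : Finset ι) : Matrix S S ℤ :=
  fun i j => A i.1 j.1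

/-- A GCM is of finite type if all of its principal minors are positive. -/
def IsFiniteType {ι : Type} [Fintype ι] [DecidableEq ι] (A : Matrix ι ι ℤ) : Prop :=
  ∀ S : Finset ι, 0 < (matSub A S).det

/-- An indecomposable GCM is of affine type if its determinant is `0` and all proper
principal minors are positive (i.e. every proper principal submatrix is of finite type). -/
def IsAffineType {ι : Type} [Fintype ι] [DecidableEq ι] (A : Matrix ι ι ℤ) : Prop :=
  (dynkinGraph A).Connected ∧ A.det = 0 ∧
    ∀ S : Finset ι, S ≠ Finset.univ → 0 < (matSub A S).det

/-- An indecomposable GCM of rank at least 3 is hyperbolic if it is of neither finite nor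
affine type, but every proper connected principal submatrix is of finite or affine type. -/
def IsHyperbolic {ι : Type} [Fintype ι] [DecidableEq ι] (A : Matrix ι ι ℤ) : Prop :=
  3 ≤ Fintype.card ι ∧ (dynkinGraph A).Connected ∧
  ¬ IsFiniteType A ∧ ¬ IsAffineType A ∧
  ∀ S : Finset ι, S ≠ Finset.univ →
    ((dynkinGraph A).induce (S : Set ι)).Connected →
    (IsFiniteType (matSub A S) ∨ IsAffineType (matSub A S))

/-- A hyperbolic GCM is of compact hyperbolic type if every proper connected principal
submatrix is of finite type. -/
def IsCompactHyperbolic {ι : Type} [Fintype ι] [DecidableEq ι] (A : Matrix ι ι ℤ) : Prop :=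
  IsHyperbolic A ∧ ∀ S : Finset ι, S ≠ Finset.univ →
    ((dynkinGraph A).induce (S : Set ι)).Connected → IsFiniteType (matSub A S)

section helpers
variable {n : ℕ} (A : Matrix (Fin n) (Fin n) ℤ)

lemma det_eq_of_equiv {α β : Type} [Fintype α] [DecidableEq α] [Fintype β] [DecidableEq β]
    (M : Matrix α α ℤ) (N : Matrix β β ℤ) (e : α ≃ β) (h : ∀ a b, M a b = N (e a) (e b)) :
    M.det = N.det := by
  have hM : M = N.submatrix e e := by ext a b; exact h a b
  rw [hM, Matrix.det_submatrix_equiv_self]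

lemma det_matSub_image {k : ℕ} (g : Fin k → Fin n) (hg : Function.Injective g) :
    (matSub A (Finset.image g Finset.univ)).det = (A.submatrix g g).det := by
  have hmem : ∀ a : Fin k, g a ∈ Finset.image g Finset.univ := by
    intro a; exact Finset.mem_image_of_mem g (Finset.mem_univ a)
  let e : Fin k ≃ {x // x ∈ Finset.image g Finset.univ} :=
    Equiv.ofBijective (fun a => ⟨g a, hmem a⟩)
      ⟨fun a b hab => hg (congrArg Subtype.val hab),
       fun b => by
        obtain ⟨a, _, ha⟩ := Finset.mem_image.mp b.2
        exact ⟨a, Subtype.ext ha⟩⟩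
  exact (det_eq_of_equiv (A.submatrix g g) (matSub A (Finset.image g Finset.univ)) e
    (fun a b => rfl)).symm

lemma induce_adj {S : Set (Fin n)} {a b : S} :
    ((dynkinGraph A).induce S).Adj a b ↔ (dynkinGraph A).Adj a.1 b.1 := Iff.rfl

def homS {S T : Set (Fin n)} (h : S ⊆ T) :
    (dynkinGraph A).induce S →g (dynkinGraph A).induce T :=
  ⟨fun a => ⟨a.1, h a.2⟩, fun {a b} hab => hab⟩

lemma exists_boundary (hconn : (dynkinGraph A).Connected) (T : Finset (Fin n))
    {t x : Fin n} (ht : t ∈ T) (hx : x ∉ T) :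
    ∃ y ∉ T, ∃ s ∈ T, (dynkinGraph A).Adj s y := by
  have key : ∀ (u v : Fin n) (w : (dynkinGraph A).Walk u v), u ∈ T → v ∉ T →
      ∃ y ∉ T, ∃ s ∈ T, (dynkinGraph A).Adj s y := by
    intro u v w
    induction w with
    | nil => intro hu hv; exact absurd hu hv
    | cons hadj p ih =>
      intro hu hv
      rename_i b c _
      by_cases hc : c ∈ T
      · exact ih hc hv
      · exact ⟨c, hc, b, hu, hadj⟩
  exact key t x ((hconn t x).some) ht hx
end helpers

section part2
variable {n : ℕ} (A : Matrix (Fin n) (Fin n) ℤ)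

lemma chain_connected {m : ℕ} (hm : 0 < m) (g : Fin m → Fin n)
    (hadj : ∀ (t : ℕ) (h : t + 1 < m),
      (dynkinGraph A).Adj (g ⟨t, by omega⟩) (g ⟨t+1, h⟩)) :
    ((dynkinGraph A).induce ((Finset.image g Finset.univ : Finset (Fin n)) : Set (Fin n))).Connected := by
  set S : Set (Fin n) := ((Finset.image g Finset.univ : Finset (Fin n)) : Set (Fin n)) with hS
  have hmem : ∀ a : Fin m, g a ∈ S := by
    intro a; simp [hS]
  have claim : ∀ (t : ℕ) (ht : t < m),
      ((dynkinGraph A).induce S).Reachable ⟨g ⟨t, ht⟩, hmem _⟩ ⟨g ⟨0, hm⟩, hmem _⟩ := by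
    intro t
    induction t with
    | zero => intro ht; exact SimpleGraph.Reachable.refl _
    | succ s ih =>
      intro ht
      have hs : s < m := by omega
      have hadj' : ((dynkinGraph A).induce S).Adj ⟨g ⟨s+1, ht⟩, hmem _⟩ ⟨g ⟨s, hs⟩, hmem _⟩ := by
        exact ((dynkinGraph A).induce S).adj_symm (hadj s ht)
      exact (hadj'.reachable).trans (ih hs)
  rw [SimpleGraph.connected_iff]
  refine ⟨?_, ⟨⟨g ⟨0, hm⟩, hmem _⟩⟩⟩
  · intro a b
    obtain ⟨ta, _, hta⟩ := Finset.mem_image.mp (by exact_mod_cast a.2)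
    obtain ⟨tb, _, htb⟩ := Finset.mem_image.mp (by exact_mod_cast b.2)
    have ha : a = ⟨g ⟨ta.1, ta.2⟩, hmem _⟩ := by
      apply Subtype.ext; simp [← hta]
    have hb : b = ⟨g ⟨tb.1, tb.2⟩, hmem _⟩ := by
      apply Subtype.ext; simp [← htb]
    rw [ha, hb]
    exact (claim ta.1 ta.2).trans (claim tb.1 tb.2).symm

end part2

section part3
variable {n : ℕ} (A : Matrix (Fin n) (Fin n) ℤ)

lemma master (hhyp : IsHyperbolic A) (T : Finset (Fin n))
    (hconn : ((dynkinGraph A).induce (T : Set (Fin n))).Connected)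
    (hcard : T.card + 2 ≤ n)
    (hdet : (matSub A T).det ≤ 0) : False := by
  have hcardn : Fintype.card (Fin n) = n := Fintype.card_fin n
  have hTne : T ≠ Finset.univ := by
    intro h
    have : T.card = n := by rw [h, Finset.card_univ, hcardn]
    omega
  rcases hhyp.2.2.2.2 T hTne hconn with hfin | haff
  · -- finite type: full minor positive
    have h1 := hfin (Finset.univ : Finset {x // x ∈ T})
    have h2 : (matSub (matSub A T) Finset.univ).det = (matSub A T).det := by
      refine det_eq_of_equiv _ _ (Equiv.subtypeUnivEquiv (fun x => Finset.mem_univ x)) ?_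
      intro a b; rfl
    rw [h2] at h1; omega
  · have hdet0 : (matSub A T).det = 0 := haff.2.1
    -- find x outside adjacent to T
    have hTnonempty : T.Nonempty := by
      obtain ⟨⟨t, ht⟩⟩ := hconn.nonempty
      exact ⟨t, ht⟩
    obtain ⟨t0, ht0⟩ := hTnonempty
    have hxout : ∃ x, x ∉ T := by
      by_contra h
      push_neg at h
      exact hTne (Finset.eq_univ_iff_forall.mpr h)
    obtain ⟨x0, hx0⟩ := hxout
    obtain ⟨y, hy, s, hs, hadj⟩ := exists_boundary A hhyp.2.1 T ht0 hx0
    set S' : Finset (Fin n) := insert y T with hS'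
    have hyS' : y ∈ S' := Finset.mem_insert_self y T
    have hTS' : ∀ a ∈ T, a ∈ S' := fun a ha => Finset.mem_insert_of_mem ha
    have hS'card : S'.card = T.card + 1 := Finset.card_insert_of_notMem hy
    have hS'ne : S' ≠ Finset.univ := by
      intro h
      have : S'.card = n := by rw [h, Finset.card_univ, hcardn]
      omega
    -- connectivity of induced graph on S'
    have hsub : (T : Set (Fin n)) ⊆ (S' : Set (Fin n)) := by
      intro a ha; exact_mod_cast hTS' a (by exact_mod_cast ha)
    have hconn' : ((dynkinGraph A).induce (S' : Set (Fin n))).Connected := by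
      rw [SimpleGraph.connected_iff]
      have hreach : ∀ a : {z // z ∈ (S' : Set (Fin n))},
          ((dynkinGraph A).induce (S' : Set (Fin n))).Reachable a
            ⟨s, hsub (by exact_mod_cast hs)⟩ := by
        intro a
        rcases Finset.mem_insert.mp (by exact_mod_cast a.2) with h | h
        · have : ((dynkinGraph A).induce (S' : Set (Fin n))).Adj a ⟨s, hsub (by exact_mod_cast hs)⟩ := by
            rw [induce_adj]
            rw [h]
            exact hadj.symm
          exact this.reachable
        · have := hconn.preconnected ⟨a.1, by exact_mod_cast h⟩ ⟨s, by exact_mod_cast hs⟩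
          have := SimpleGraph.Reachable.map (homS A hsub) this
          convert this using 2 <;> rfl
      exact ⟨fun a b => (hreach a).trans (hreach b).symm, ⟨⟨s, hsub (by exact_mod_cast hs)⟩⟩⟩
    -- T viewed inside S'
    set T' : Finset {z // z ∈ S'} := Finset.univ.filter (fun z => z.1 ∈ T) with hT'
    have hT'ne : T' ≠ Finset.univ := by
      intro h
      have : (⟨y, hyS'⟩ : {z // z ∈ S'}) ∈ T' := h ▸ Finset.mem_univ _
      rw [hT'] at this
      exact hy (Finset.mem_filter.mp this).2
    have hkey : (matSub (matSub A S') T').det = (matSub A T).det := by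
      refine det_eq_of_equiv _ _ ?_ ?_
      · refine ⟨fun z => ⟨z.1.1, (Finset.mem_filter.mp z.2).2⟩,
          fun t => ⟨⟨t.1, hTS' t.1 t.2⟩, Finset.mem_filter.mpr ⟨Finset.mem_univ _, t.2⟩⟩, ?_, ?_⟩
        · intro z; apply Subtype.ext; apply Subtype.ext; rfl
        · intro t; apply Subtype.ext; rfl
      · intro a b; rfl
    rcases hhyp.2.2.2.2 S' hS'ne hconn' with hfin' | haff'
    · have := hfin' T'
      rw [hkey, hdet0] at this
      exact lt_irrefl 0 this
    · have := haff'.2.2 T' hT'ne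
      rw [hkey, hdet0] at this
      exact lt_irrefl 0 this

end part3

section part4
variable {n : ℕ} (A : Matrix (Fin n) (Fin n) ℤ)

lemma edge_neg (hA : IsGCM A) {i j : Fin n} (hadj : (dynkinGraph A).Adj i j) :
    A i j ≤ -1 ∧ A j i ≤ -1 := by
  obtain ⟨hne, h1, h2⟩ := hadj
  constructor
  · have := hA.2.1 i j hne; omega
  · have := hA.2.1 j i hne.symm; omega

lemma image_three (a b c : Fin n) :
    Finset.image ![a,b,c] Finset.univ = {a, b, c} := by
  ext x
  simp only [Finset.mem_image, Finset.mem_univ, true_and, Finset.mem_insert,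
    Finset.mem_singleton]
  constructor
  · rintro ⟨t, ht⟩
    fin_cases t <;> simp_all
  · rintro (rfl | rfl | rfl)
    exacts [⟨0, rfl⟩, ⟨1, rfl⟩, ⟨2, rfl⟩]

lemma prod_nonneg_of_nonpos {x y : ℤ} (hx : x ≤ 0) (hy : y ≤ 0) : 0 ≤ x * y := by nlinarith

lemma prod_nonpos_of_nonpos_nonneg {x y : ℤ} (hx : x ≤ 0) (hy : 0 ≤ y) : x * y ≤ 0 := by nlinarith

lemma det3_nonpos (hA : IsGCM A) {a b c : Fin n}
    (hab : a ≠ b) (hac : a ≠ c) (hbc : b ≠ c)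
    (h3 : 3 ≤ A a b * A b a)
    (hcadj : 1 ≤ A a c * A c a ∨ 1 ≤ A b c * A c b) :
    (matSub A ({a, b, c} : Finset (Fin n))).det ≤ 0 := by
  have hinj : Function.Injective ![a,b,c] := by
    intro u v huv
    fin_cases u <;> fin_cases v <;> simp_all <;> first
      | rfl
      | exact absurd huv (by assumption)
      | exact absurd huv.symm (by assumption)
  have him := image_three (n := n) a b c
  rw [← him, det_matSub_image A _ hinj, Matrix.det_fin_three]
  have e00 : A.submatrix ![a,b,c] ![a,b,c] 0 0 = A a a := rfl
  have hPab : 3 ≤ A a b * A b a := h3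
  have hPac : 0 ≤ A a c * A c a :=
    prod_nonneg_of_nonpos (hA.2.1 a c hac) (hA.2.1 c a hac.symm)
  have hPbc : 0 ≤ A b c * A c b :=
    prod_nonneg_of_nonpos (hA.2.1 b c hbc) (hA.2.1 c b hbc.symm)
  have hsum : 1 ≤ A a c * A c a + A b c * A c b := by rcases hcadj with h | h <;> omega
  have hT1 : A a b * (A b c * A c a) ≤ 0 := by
    have h1 : 0 ≤ A b c * A c a :=
      prod_nonneg_of_nonpos (hA.2.1 b c hbc) (hA.2.1 c a hac.symm)
    exact prod_nonpos_of_nonpos_nonneg (hA.2.1 a b hab) h1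
  have hT2 : A a c * (A b a * A c b) ≤ 0 := by
    have h1 : 0 ≤ A b a * A c b :=
      prod_nonneg_of_nonpos (hA.2.1 b a hab.symm) (hA.2.1 c b hbc.symm)
    exact prod_nonpos_of_nonpos_nonneg (hA.2.1 a c hac) h1
  have haa : A a a = 2 := hA.1 a
  have hbb : A b b = 2 := hA.1 b
  have hcc : A c c = 2 := hA.1 c
  simp only [Matrix.submatrix_apply, Matrix.cons_val_zero, Matrix.cons_val_one,
    Matrix.head_cons, Matrix.cons_val_two, Matrix.tail_cons, Matrix.head_fin_const]
  rw [haa, hbb, hcc]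
  nlinarith [hPab, hPac, hPbc, hsum, hT1, hT2]

lemma edge_prod_le_two (hA : IsGCM A) (hhyp : IsHyperbolic A) (h5 : 5 ≤ n)
    {i j : Fin n} (hadj : (dynkinGraph A).Adj i j) : A i j * A j i ≤ 2 := by
  by_contra hgt
  push_neg at hgt
  have h3 : 3 ≤ A i j * A j i := hgt
  have hij : i ≠ j := hadj.1
  -- find a third vertex adjacent to i or j
  have hx : ∃ x, x ∉ ({i, j} : Finset (Fin n)) := by
    by_contra h
    push_neg at h
    have : (Finset.univ : Finset (Fin n)).card ≤ ({i,j} : Finset (Fin n)).card :=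
      Finset.card_le_card (fun x _ => h x)
    have h2 : ({i,j} : Finset (Fin n)).card ≤ 2 := Finset.card_insert_le .. |>.trans (by simp)
    simp [Finset.card_univ] at this
    omega
  obtain ⟨x0, hx0⟩ := hx
  obtain ⟨y, hy, s, hs, hadjs⟩ := exists_boundary A hhyp.2.1 {i, j}
    (Finset.mem_insert_self i {j}) hx0
  have hyi : y ≠ i := fun h => hy (h ▸ Finset.mem_insert_self i {j})
  have hyj : y ≠ j := fun h => hy (by rw [h]; simp)
  have hdet : (matSub A ({i, j, y} : Finset (Fin n))).det ≤ 0 := by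
    refine det3_nonpos A hA hij hyi.symm hyj.symm h3 ?_
    rcases Finset.mem_insert.mp hs with rfl | hs'
    · left
      obtain ⟨h1, h2⟩ := edge_neg A hA hadjs
      nlinarith
    · have : s = j := Finset.mem_singleton.mp hs'
      subst this
      right
      obtain ⟨h1, h2⟩ := edge_neg A hA hadjs
      nlinarith
  -- connectivity of {i,j,y} and size bound, then master
  have hcard3 : ({i, j, y} : Finset (Fin n)).card ≤ 3 := by
    refine (Finset.card_insert_le ..).trans ?_
    have := Finset.card_insert_le j ({y} : Finset (Fin n))
    simp_all
    omega
  have hconn3 : ((dynkinGraph A).induce (({i, j, y} : Finset (Fin n)) : Set (Fin n))).Connected := by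
    rcases Finset.mem_insert.mp hs with rfl | hs'
    · -- s = i : chain y - i - j
      have him : Finset.image ![y,s,j] Finset.univ = {s, j, y} := by
        rw [image_three]
        ext x; simp only [Finset.mem_insert, Finset.mem_singleton]; tauto
      rw [← him]
      refine chain_connected A (by omega) _ ?_
      intro t ht
      have ht' : t < 2 := by omega
      interval_cases t
      · simpa using hadjs.symm
      · simpa using hadj
    · have hsj : s = j := Finset.mem_singleton.mp hs'
      subst hsj
      have him : Finset.image ![i,s,y] Finset.univ = {i, s, y} := image_three ..
      rw [← him]
      refine chain_connected A (by omega) _ ?_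
      intro t ht
      have ht' : t < 2 := by omega
      interval_cases t
      · simpa using hadj
      · simpa using hadjs
  exact master A hhyp _ hconn3 (by omega) hdet

end part4

section part5
variable {n : ℕ} (A : Matrix (Fin n) (Fin n) ℤ) (d : Fin n → ℚ)

/-- For an edge with product ≤ 2, the ratio of symmetrizer values is a power of 2 with
exponent in {-1,0,1}; exponent 0 iff single edge, nonzero iff product 2. -/
lemma edge_ratio (hA : IsGCM A) (hd : ∀ i, 0 < d i)
    (hdA : ∀ i j, d i * (A i j : ℚ) = d j * (A j i : ℚ))
    {i j : Fin n} (hadj : (dynkinGraph A).Adj i j) (hle2 : A i j * A j i ≤ 2) :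
    ∃ ε : ℤ, d j = d i * 2 ^ ε ∧ ε.natAbs ≤ 1 ∧
      (ε = 0 → A i j = -1 ∧ A j i = -1) ∧ (ε ≠ 0 → A i j * A j i = 2) := by
  obtain ⟨ha, hb⟩ := edge_neg A hA hadj
  have hrel : d i * (A i j : ℚ) = d j * (A j i : ℚ) := hdA i j
  have hcase : (A i j = -1 ∧ A j i = -1) ∨ (A i j = -1 ∧ A j i = -2) ∨
      (A i j = -2 ∧ A j i = -1) := by
    have ha2 : -2 ≤ A i j := by nlinarith
    have hb2 : -2 ≤ A j i := by nlinarith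
    have hno : ¬(A i j = -2 ∧ A j i = -2) := by
      rintro ⟨u, v⟩; rw [u, v] at hle2; norm_num at hle2
    omega
  rcases hcase with ⟨h1, h2⟩ | ⟨h1, h2⟩ | ⟨h1, h2⟩
  · refine ⟨0, ?_, by norm_num, fun _ => ⟨h1, h2⟩, fun h => absurd rfl h⟩
    rw [h1, h2] at hrel
    push_cast at hrel
    simp only [zpow_zero, mul_one]
    linarith
  · refine ⟨-1, ?_, by norm_num, by omega, fun _ => by rw [h1, h2]; ring⟩
    rw [h1, h2] at hrel
    push_cast at hrel
    have : d j = d i / 2 := by linarith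
    rw [this, zpow_neg, zpow_one, ← div_eq_mul_inv]
  · refine ⟨1, ?_, by norm_num, by omega, fun _ => by rw [h1, h2]; ring⟩
    rw [h1, h2] at hrel
    push_cast at hrel
    have : d j = 2 * d i := by linarith
    rw [this]
    norm_num
    ring

/-- all symmetrizer ratios are powers of 2 -/
lemma ratio_pow (hA : IsGCM A) (hhyp : IsHyperbolic A) (h5 : 5 ≤ n) (hd : ∀ i, 0 < d i)
    (hdA : ∀ i j, d i * (A i j : ℚ) = d j * (A j i : ℚ)) (i j : Fin n) :
    ∃ k : ℤ, d j = d i * 2 ^ k := by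
  have hreach : (dynkinGraph A).Reachable i j := hhyp.2.1.preconnected i j
  obtain ⟨w⟩ := hreach
  induction w with
  | nil => exact ⟨0, by simp⟩
  | cons hadj p ih =>
    obtain ⟨k, hk⟩ := ih
    obtain ⟨ε, hε, _⟩ := edge_ratio A d hA hd hdA hadj
      (edge_prod_le_two A hA hhyp h5 hadj)
    exact ⟨ε + k, by rw [hk, hε, zpow_add₀ (by norm_num : (2:ℚ) ≠ 0)]; ring⟩

end part5

section part6
variable {n : ℕ} (A : Matrix (Fin n) (Fin n) ℤ)

def DChain (f : ℕ → Fin n) (L : ℕ) : Prop :=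
  ∀ i, i < L → (dynkinGraph A).Adj (f i) (f (i+1))

lemma exists_chain (hconn : (dynkinGraph A).Connected) (u w : Fin n) :
    ∃ (L : ℕ) (f : ℕ → Fin n), f 0 = u ∧ f L = w ∧ DChain A f L := by
  obtain ⟨p⟩ := hconn.preconnected u w
  exact ⟨p.length, p.getVert, p.getVert_zero, p.getVert_length,
    fun i hi => p.adj_getVert_succ hi⟩

/-- splice out a repetition or use a chord to shorten a chain -/
lemma chain_shorten {f : ℕ → Fin n} {L a b : ℕ} (hc : DChain A f L)
    (hab : a < b) (hbL : b ≤ L)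
    (h : f a = f b ∨ ((dynkinGraph A).Adj (f a) (f b) ∧ a + 1 < b)) :
    ∃ (L' : ℕ) (f' : ℕ → Fin n), L' < L ∧ f' 0 = f 0 ∧ f' L' = f L ∧ DChain A f' L' := by
  rcases h with heq | ⟨hadj, hab2⟩
  · -- remove the cycle between a and b
    refine ⟨L - (b - a), fun i => if i ≤ a then f i else f (i + (b - a)), by omega, ?_, ?_, ?_⟩
    · simp
    · beta_reduce
      have h1 : ¬ (L - (b - a) ≤ a) ∨ L - (b - a) = a := by omega
      rcases h1 with h1 | h1
      · rw [if_neg h1]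
        congr 1
        omega
      · rw [if_pos (le_of_eq h1), h1]
        have hbL' : b = L := by omega
        rw [← hbL', ← heq]
    · intro i hi
      beta_reduce
      by_cases h1 : i + 1 ≤ a
      · rw [if_pos (by omega : i ≤ a), if_pos h1]
        exact hc i (by omega)
      · by_cases h2 : i ≤ a
        · -- i = a
          have hia : i = a := by omega
          rw [if_pos h2, if_neg h1, hia]
          have : a + 1 + (b - a) = b + 1 := by omega
          rw [this]
          have : f a = f b := heq
          rw [this]
          exact hc b (by omega)
        · rw [if_neg h2, if_neg h1]
          have : i + 1 + (b - a) = i + (b - a) + 1 := by omega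
          rw [this]
          exact hc (i + (b - a)) (by omega)
  · -- use chord: shift by b - a - 1
    refine ⟨L - (b - a - 1), fun i => if i ≤ a then f i else f (i + (b - a - 1)), by omega,
      ?_, ?_, ?_⟩
    · simp
    · beta_reduce
      have h1 : ¬ (L - (b - a - 1) ≤ a) := by omega
      rw [if_neg h1]
      congr 1
      omega
    · intro i hi
      beta_reduce
      by_cases h1 : i + 1 ≤ a
      · rw [if_pos (by omega : i ≤ a), if_pos h1]
        exact hc i (by omega)
      · by_cases h2 : i ≤ a
        · have hia : i = a := by omega
          rw [if_pos h2, if_neg h1, hia]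
          have : a + 1 + (b - a - 1) = b := by omega
          rw [this]
          exact hadj
        · rw [if_neg h2, if_neg h1]
          have : i + 1 + (b - a - 1) = i + (b - a - 1) + 1 := by omega
          rw [this]
          exact hc (i + (b - a - 1)) (by omega)

end part6

section part7

lemma tridiag_det_zero {m : ℕ} (hm : 1 ≤ m) (M : Matrix (Fin (m+2)) (Fin (m+2)) ℚ)
    (hdiag : ∀ t, M t t = 2)
    (hfar : ∀ t s : Fin (m+2), (t:ℕ)+2 ≤ (s:ℕ) ∨ (s:ℕ)+2 ≤ (t:ℕ) → M t s = 0)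
    (hfirst : M ⟨0, by omega⟩ ⟨1, by omega⟩ * M ⟨1, by omega⟩ ⟨0, by omega⟩ = 2)
    (hlast : M ⟨m, by omega⟩ ⟨m+1, by omega⟩ * M ⟨m+1, by omega⟩ ⟨m, by omega⟩ = 2)
    (hmid : ∀ (t : ℕ) (h0 : 0 < t) (h1 : t < m),
      M ⟨t, by omega⟩ ⟨t+1, by omega⟩ = -1 ∧ M ⟨t+1, by omega⟩ ⟨t, by omega⟩ = -1) :
    M.det = 0 := by
  rw [← Matrix.exists_mulVec_eq_zero_iff]
  set v : Fin (m+2) → ℚ := fun t =>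
    if (t:ℕ) = 0 then -M ⟨0, by omega⟩ ⟨1, by omega⟩
    else if (t:ℕ) = m+1 then -M ⟨m+1, by omega⟩ ⟨m, by omega⟩
    else 2 with hv
  have hv0 : v ⟨0, by omega⟩ = -M ⟨0, by omega⟩ ⟨1, by omega⟩ := by
    simp [hv]
  have hvlast : v ⟨m+1, by omega⟩ = -M ⟨m+1, by omega⟩ ⟨m, by omega⟩ := by
    simp [hv]
  have hvmid : ∀ (t : ℕ) (ht : t < m+2), t ≠ 0 → t ≠ m+1 → v ⟨t, ht⟩ = 2 := by
    intro t ht h0 h1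
    simp [hv, h0, h1]
  refine ⟨v, ?_, ?_⟩
  · intro h
    have h1 : v ⟨1, by omega⟩ = 0 := by rw [h]; rfl
    rw [hvmid 1 (by omega) (by omega) (by omega)] at h1
    norm_num at h1
  · funext j
    show ∑ i, M j i * v i = 0
    have rowsum : ∀ (s : Finset (Fin (m+2))), (∀ i, i ∉ s → M j i * v i = 0) →
        ∑ i, M j i * v i = ∑ i ∈ s, M j i * v i := fun s h =>
      (Finset.sum_subset (Finset.subset_univ s) (fun i _ hi => h i hi)).symm
    rcases j with ⟨t, ht⟩
    by_cases ht0 : t = 0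
    · subst ht0
      rw [rowsum {⟨0, by omega⟩, ⟨1, by omega⟩} ?_]
      · rw [Finset.sum_pair (by simp only [ne_eq, Fin.mk.injEq]; omega)]
        rw [hv0, hvmid 1 (by omega) (by omega) (by omega), hdiag]
        ring
      · intro i hi
        simp only [Finset.mem_insert, Finset.mem_singleton] at hi
        push_neg at hi
        have : (1:ℕ)+1 ≤ (i:ℕ) := by
          rcases i with ⟨iv, hiv⟩
          simp only [ne_eq, Fin.mk.injEq] at hi
          simp only [Fin.val_mk]
          omega
        rw [hfar _ _ (by simp only [Fin.val_mk]; omega)]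
        ring
    · by_cases htm : t = m+1
      · subst htm
        rw [rowsum {⟨m, by omega⟩, ⟨m+1, by omega⟩} ?_]
        · rw [Finset.sum_pair (by simp only [ne_eq, Fin.mk.injEq]; omega)]
          rw [hvlast, hvmid m (by omega) (by omega) (by omega), hdiag]
          ring
        · intro i hi
          simp only [Finset.mem_insert, Finset.mem_singleton] at hi
          push_neg at hi
          have : (i:ℕ)+2 ≤ m+1 := by
            rcases i with ⟨iv, hiv⟩
            simp only [ne_eq, Fin.mk.injEq] at hi
            simp only [Fin.val_mk]
            omega
          rw [hfar _ _ (by simp only [Fin.val_mk]; omega)]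
          ring
      · -- middle row, t = r+1 with r < m
        obtain ⟨r, rfl⟩ : ∃ r, t = r + 1 := ⟨t - 1, by omega⟩
        have hrm : r < m := by omega
        rw [rowsum {⟨r, by omega⟩, ⟨r+1, by omega⟩, ⟨r+2, by omega⟩} ?_]
        · rw [Finset.sum_insert (by simp [Fin.ext_iff]),
            Finset.sum_pair (by simp [Fin.ext_iff])]
          rw [hdiag, hvmid (r+1) (by omega) (by omega) (by omega)]
          by_cases hr0 : r = 0
          · subst hr0
            rw [hv0]
            by_cases hm1 : m = 1
            · subst hm1
              rw [hvlast]
              linear_combination - hfirst - hlast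
            · rw [hvmid 2 (by omega) (by omega) (by omega),
                (hmid 1 (by omega) (by omega)).1]
              linear_combination - hfirst
          · rw [hvmid r (by omega) (by omega) (by omega),
              (hmid r (by omega) hrm).2]
            by_cases hrm1 : r + 1 = m
            · have e1 : (⟨r+1, ht⟩ : Fin (m+2)) = ⟨m, by omega⟩ := by
                simp only [Fin.ext_iff]; omega
              have e2 : (⟨r+2, by omega⟩ : Fin (m+2)) = ⟨m+1, by omega⟩ := by
                simp only [Fin.ext_iff]; omega
              rw [e1, e2, hvlast]
              linear_combination - hlast
            · rw [hvmid (r+2) (by omega) (by omega) (by omega),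
                (hmid (r+1) (by omega) (by omega)).1]
              ring
        · intro i hi
          simp only [Finset.mem_insert, Finset.mem_singleton] at hi
          push_neg at hi
          have : (i:ℕ)+2 ≤ r+1 ∨ r+1+2 ≤ (i:ℕ) := by
            rcases i with ⟨iv, hiv⟩
            simp only [ne_eq, Fin.mk.injEq] at hi
            simp only [Fin.val_mk]
            omega
          rw [hfar _ _ (by simp only [Fin.val_mk]; omega)]
          ring

end part7

/-- For a symmetrizable hyperbolic GCM with positive rational symmetrizer `d`, the values
`d 1, …, d n` take at most 4 distinct values (hence the real roots of the corresponding
root system have at most 4 distinct lengths). -/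
theorem hyperbolic_at_most_four_root_lengths {n : ℕ} (A : Matrix (Fin n) (Fin n) ℤ)
    (hA : IsGCM A) (hsym : IsSymmetrizable A) (hhyp : IsHyperbolic A)
    (d : Fin n → ℚ) (hd : ∀ i, 0 < d i)
    (hdA : ∀ i j, d i * (A i j : ℚ) = d j * (A j i : ℚ)) :
    (Finset.univ.image d).card ≤ 4 := by
  classical
  by_cases hn : n ≤ 4
  · calc (Finset.univ.image d).card ≤ (Finset.univ : Finset (Fin n)).card :=
        Finset.card_image_le
    _ = n := by simp
    _ ≤ 4 := hn
  push_neg at hn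
  have h5 : 5 ≤ n := hn
  by_contra hbig
  push_neg at hbig
  have hbig5 : 5 ≤ (Finset.univ.image d).card := hbig
  set i0 : Fin n := ⟨0, by omega⟩ with hi0
  have hd0 : d i0 ≠ 0 := ne_of_gt (hd _)
  -- exponent function
  have hpow : ∀ j : Fin n, ∃ k : ℤ, d j = d i0 * 2 ^ k :=
    fun j => ratio_pow A d hA hhyp h5 hd hdA i0 j
  set e : Fin n → ℤ := fun i => (hpow i).choose with he_def
  have he : ∀ i, d i = d i0 * 2 ^ (e i) := fun i => (hpow i).choose_spec
  have hfinj : Function.Injective (fun k : ℤ => d i0 * (2:ℚ) ^ k) := by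
    intro a b hab
    simp only at hab
    exact zpow_right_injective₀ (by norm_num) (by norm_num) (mul_left_cancel₀ hd0 hab)
  have himg : Finset.univ.image d
      = (Finset.univ.image e).image (fun k => d i0 * (2:ℚ) ^ k) := by
    ext x
    simp only [Finset.mem_image, Finset.mem_univ, true_and]
    constructor
    · rintro ⟨i, rfl⟩
      exact ⟨e i, ⟨i, rfl⟩, (he i).symm⟩
    · rintro ⟨k, ⟨i, rfl⟩, rfl⟩
      exact ⟨i, he i⟩
  have hcarde : 5 ≤ (Finset.univ.image e).card := by
    rw [himg, Finset.card_image_of_injective _ hfinj] at hbig5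
    exact hbig5
  set E := Finset.univ.image e with hE
  have hEne : E.Nonempty := Finset.card_pos.mp (by omega)
  set Mx := E.max' hEne with hMx
  set mn := E.min' hEne with hmn
  have hspread : mn + 4 ≤ Mx := by
    have hsub : E ⊆ Finset.Icc mn Mx :=
      fun x hx => Finset.mem_Icc.mpr ⟨E.min'_le x hx, E.le_max' x hx⟩
    have hc := Finset.card_le_card hsub
    rw [Int.card_Icc] at hc
    omega
  obtain ⟨u, -, hu⟩ := Finset.mem_image.mp (E.min'_mem hEne)
  obtain ⟨w, -, hw⟩ := Finset.mem_image.mp (E.max'_mem hEne)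
  have hdw : d w = d u * 2 ^ (Mx - mn) := by
    rw [he u, he w, hu, hw, mul_assoc, ← zpow_add₀ (by norm_num : (2:ℚ) ≠ 0)]
    congr 1
    congr 1; rw [hMx, hmn]; ring
  -- minimal chain from u to w
  have hP : ∃ L : ℕ, ∃ f : ℕ → Fin n, f 0 = u ∧ f L = w ∧ DChain A f L :=
    exists_chain A hhyp.2.1 u w
  set L := Nat.find hP with hLdef
  obtain ⟨f, hf0, hfL, hfc⟩ := Nat.find_spec hP
  have hmin : ∀ l, l < L → ¬ (∃ f : ℕ → Fin n, f 0 = u ∧ f l = w ∧ DChain A f l) :=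
    fun l hl => Nat.find_min hP hl
  have hinjf : ∀ a b, a < b → b ≤ L → f a ≠ f b := by
    intro a b hab hbL heq
    obtain ⟨L', f', hL', h0', hL'', hc'⟩ := chain_shorten A hfc hab hbL (Or.inl heq)
    exact hmin L' hL' ⟨f', by rw [h0', hf0], by rw [hL'', hfL], hc'⟩
  have hchord : ∀ a b, a + 2 ≤ b → b ≤ L → A (f a) (f b) = 0 ∧ A (f b) (f a) = 0 := by
    intro a b hab hbL
    have hne : f a ≠ f b := hinjf a b (by omega) hbL
    have hnadj : ¬ (dynkinGraph A).Adj (f a) (f b) := by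
      intro hadj
      obtain ⟨L', f', hL', h0', hL'', hc'⟩ :=
        chain_shorten A hfc (by omega : a < b) hbL (Or.inr ⟨hadj, by omega⟩)
      exact hmin L' hL' ⟨f', by rw [h0', hf0], by rw [hL'', hfL], hc'⟩
    have h0 : A (f a) (f b) = 0 ∨ A (f b) (f a) = 0 := by
      by_contra hcon
      push_neg at hcon
      exact hnadj ⟨hne, hcon.1, hcon.2⟩
    rcases h0 with h0 | h0
    · exact ⟨h0, hA.2.2 _ _ h0⟩
    · exact ⟨hA.2.2 _ _ h0, h0⟩
  -- step exponents
  have hratio : ∀ i, i < L → ∃ ε : ℤ, d (f (i+1)) = d (f i) * 2 ^ ε ∧ ε.natAbs ≤ 1 ∧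
      (ε = 0 → A (f i) (f (i+1)) = -1 ∧ A (f (i+1)) (f i) = -1) ∧
      (ε ≠ 0 → A (f i) (f (i+1)) * A (f (i+1)) (f i) = 2) :=
    fun i hi => edge_ratio A d hA hd hdA (hfc i hi) (edge_prod_le_two A hA hhyp h5 (hfc i hi))
  set ε : ℕ → ℤ := fun i => if hi : i < L then (hratio i hi).choose else 0 with hεdef
  have hεspec : ∀ i (hi : i < L), d (f (i+1)) = d (f i) * 2 ^ (ε i) ∧ (ε i).natAbs ≤ 1 ∧
      (ε i = 0 → A (f i) (f (i+1)) = -1 ∧ A (f (i+1)) (f i) = -1) ∧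
      (ε i ≠ 0 → A (f i) (f (i+1)) * A (f (i+1)) (f i) = 2) := by
    intro i hi
    simp only [hεdef, dif_pos hi]
    exact (hratio i hi).choose_spec
  have hsum : ∀ t, t ≤ L → d (f t) = d u * 2 ^ (∑ i ∈ Finset.range t, ε i) := by
    intro t
    induction t with
    | zero => intro _; simp [hf0]
    | succ t ih =>
      intro ht
      rw [Finset.sum_range_succ, (hεspec t (by omega)).1, ih (by omega),
        zpow_add₀ (by norm_num : (2:ℚ) ≠ 0), mul_assoc]
  have hsumL : ∑ i ∈ Finset.range L, ε i = Mx - mn := by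
    have h1 := hsum L le_rfl
    rw [hfL, hdw] at h1
    have h2 : (2:ℚ) ^ (Mx - mn) = 2 ^ (∑ i ∈ Finset.range L, ε i) :=
      mul_left_cancel₀ (ne_of_gt (hd u)) h1
    exact (zpow_right_injective₀ (by norm_num) (by norm_num) h2).symm
  -- at least 4 up-steps
  set S1 := (Finset.range L).filter (fun i => ε i = 1) with hS1def
  have hS1 : 4 ≤ S1.card := by
    have hle : ∑ i ∈ Finset.range L, ε i
        ≤ ∑ i ∈ Finset.range L, (if ε i = 1 then (1:ℤ) else 0) := by
      refine Finset.sum_le_sum ?_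
      intro i hi
      have hna := (hεspec i (Finset.mem_range.mp hi)).2.1
      by_cases h : ε i = 1
      · simp [h]
      · simp only [h, if_false]
        omega
    rw [Finset.sum_boole] at hle
    have : (4:ℤ) ≤ (S1.card : ℤ) := by
      rw [hS1def]
      omega
    exact_mod_cast this
  set D := (Finset.range L).filter (fun i => ε i ≠ 0) with hDdef
  have hS1D : S1 ⊆ D := by
    intro i hi
    rw [hS1def, Finset.mem_filter] at hi
    rw [hDdef, Finset.mem_filter]
    refine ⟨hi.1, ?_⟩
    rw [hi.2]
    norm_num
  have hD4 : 4 ≤ D.card := le_trans hS1 (Finset.card_le_card hS1D)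
  have hDne : D.Nonempty := Finset.card_pos.mp (by omega)
  set p1 := D.min' hDne with hp1def
  have hp1D : p1 ∈ D := D.min'_mem hDne
  set D1 := D.erase p1 with hD1def
  have hD1card : 3 ≤ D1.card := by rw [hD1def, Finset.card_erase_of_mem hp1D]; omega
  have hD1ne : D1.Nonempty := Finset.card_pos.mp (by omega)
  set p2 := D1.min' hD1ne with hp2def
  have hp2D1 : p2 ∈ D1 := D1.min'_mem hD1ne
  have hp2D : p2 ∈ D := Finset.mem_of_mem_erase hp2D1
  have hp12 : p1 < p2 :=
    lt_of_le_of_ne (D.min'_le p2 hp2D) (Finset.ne_of_mem_erase hp2D1).symm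
  set D2 := D1.erase p2 with hD2def
  have hD2card : 2 ≤ D2.card := by rw [hD2def, Finset.card_erase_of_mem hp2D1]; omega
  obtain ⟨p3, hp3, p4, hp4, hp34⟩ := Finset.one_lt_card.mp (by omega : 1 < D2.card)
  have hp3D1 : p3 ∈ D1 := Finset.mem_of_mem_erase hp3
  have hp4D1 : p4 ∈ D1 := Finset.mem_of_mem_erase hp4
  have hp23 : p2 < p3 :=
    lt_of_le_of_ne (D1.min'_le p3 hp3D1) (Finset.ne_of_mem_erase hp3).symm
  have hp24 : p2 < p4 :=
    lt_of_le_of_ne (D1.min'_le p4 hp4D1) (Finset.ne_of_mem_erase hp4).symm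
  have hmemL : ∀ q, q ∈ D → q < L :=
    fun q hq => Finset.mem_range.mp (Finset.mem_filter.mp hq).1
  have hp1L : p1 < L := hmemL p1 hp1D
  have hp2L : p2 < L := hmemL p2 hp2D
  have hp3L : p3 < L := hmemL p3 (Finset.mem_of_mem_erase hp3D1)
  have hp4L : p4 < L := hmemL p4 (Finset.mem_of_mem_erase hp4D1)
  have hp1ne : ε p1 ≠ 0 := (Finset.mem_filter.mp hp1D).2
  have hp2ne : ε p2 ≠ 0 := (Finset.mem_filter.mp hp2D).2
  have hbetween : ∀ i, p1 < i → i < p2 → ε i = 0 := by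
    intro i h1 h2
    by_contra hne0
    have hiD : i ∈ D := Finset.mem_filter.mpr ⟨Finset.mem_range.mpr (by omega), hne0⟩
    have hiD1 : i ∈ D1 := Finset.mem_erase.mpr ⟨by omega, hiD⟩
    have := D1.min'_le i hiD1
    omega
  -- the bad segment
  set m2 := p2 - p1 with hm2def
  have hm2 : 1 ≤ m2 := by omega
  set g : Fin (m2+2) → Fin n := fun t => f (p1 + t.1) with hgdef
  have hgbound : ∀ t : Fin (m2+2), p1 + t.1 ≤ L := by
    intro t
    have := t.2
    omega
  have hginj : Function.Injective g := by
    intro a b hab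
    by_contra hne
    rcases lt_trichotomy a.1 b.1 with h | h | h
    · exact hinjf _ _ (by omega) (hgbound b) hab
    · exact hne (Fin.ext h)
    · exact hinjf _ _ (by omega) (hgbound a) hab.symm
  set T := Finset.image g Finset.univ with hTdef
  have hTconn : ((dynkinGraph A).induce (T : Set (Fin n))).Connected := by
    refine chain_connected A (by omega) g ?_
    intro t h
    exact hfc (p1 + t) (by omega)
  have hTcard : T.card = m2 + 2 := by
    rw [hTdef, Finset.card_image_of_injective _ hginj, Finset.card_univ, Fintype.card_fin]
  have hout3 : f (p3+1) ∉ T := by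
    intro hmem
    obtain ⟨t, -, ht⟩ := Finset.mem_image.mp hmem
    refine hinjf (p1 + t.1) (p3+1) ?_ (by omega) ht
    have := t.2
    omega
  have hout4 : f (p4+1) ∉ T := by
    intro hmem
    obtain ⟨t, -, ht⟩ := Finset.mem_image.mp hmem
    refine hinjf (p1 + t.1) (p4+1) ?_ (by omega) ht
    have := t.2
    omega
  have hne34 : f (p3+1) ≠ f (p4+1) := by
    rcases lt_trichotomy p3 p4 with h | h | h
    · exact hinjf (p3+1) (p4+1) (by omega) (by omega)
    · exact absurd h hp34
    · exact (hinjf (p4+1) (p3+1) (by omega) (by omega)).symm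
  have hcardbound : T.card + 2 ≤ n := by
    have hc := Finset.card_le_card
      (Finset.subset_univ (insert (f (p3+1)) (insert (f (p4+1)) T)))
    rw [Finset.card_insert_of_notMem (by
        rw [Finset.mem_insert]
        push_neg
        exact ⟨hne34, hout3⟩),
      Finset.card_insert_of_notMem hout4, Finset.card_univ, Fintype.card_fin] at hc
    omega
  -- determinant of the segment is zero
  have hdetT : (matSub A T).det = 0 := by
    rw [hTdef, det_matSub_image A g hginj]
    have hmap := RingHom.map_det (Int.castRingHom ℚ) (A.submatrix g g)
    set M' := (Int.castRingHom ℚ).mapMatrix (A.submatrix g g) with hM'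
    have hg1 : g ⟨m2, by omega⟩ = f p2 := by
      rw [hgdef]
      show f _ = f _
      congr 1
      simp only [Fin.val_mk]
      omega
    have hg2 : g ⟨m2+1, by omega⟩ = f (p2+1) := by
      rw [hgdef]
      show f _ = f _
      congr 1
      simp only [Fin.val_mk]
      omega
    have hz : M'.det = 0 := by
      refine tridiag_det_zero hm2 M' ?_ ?_ ?_ ?_ ?_
      · intro t
        simp only [hM', RingHom.mapMatrix_apply, Matrix.map_apply, Matrix.submatrix_apply]
        rw [hA.1]
        norm_num
      · intro t s hts
        simp only [hM', RingHom.mapMatrix_apply, Matrix.map_apply, Matrix.submatrix_apply,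
          hgdef]
        rcases hts with h | h
        · rw [(hchord (p1 + t.1) (p1 + s.1) (by omega) (hgbound s)).1]
          norm_num
        · rw [(hchord (p1 + s.1) (p1 + t.1) (by omega) (hgbound t)).2]
          norm_num
      · simp only [hM', RingHom.mapMatrix_apply, Matrix.map_apply, Matrix.submatrix_apply,
          Int.coe_castRingHom]
        have h1 := (hεspec p1 hp1L).2.2.2 hp1ne
        exact_mod_cast h1
      · simp only [hM', RingHom.mapMatrix_apply, Matrix.map_apply, Matrix.submatrix_apply,
          hg1, hg2, Int.coe_castRingHom]
        have h1 := (hεspec p2 hp2L).2.2.2 hp2ne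
        exact_mod_cast h1
      · intro t h0 h1
        have hbet := (hεspec (p1 + t) (by omega)).2.2.1 (hbetween (p1+t) (by omega) (by omega))
        constructor
        · simp only [hM', RingHom.mapMatrix_apply, Matrix.map_apply, Matrix.submatrix_apply,
            hgdef, Int.coe_castRingHom]
          exact_mod_cast hbet.1
        · simp only [hM', RingHom.mapMatrix_apply, Matrix.map_apply, Matrix.submatrix_apply,
            hgdef, Int.coe_castRingHom]
          exact_mod_cast hbet.2
    rw [hz] at hmap
    have hcast : (((A.submatrix g g).det : ℤ) : ℚ) = 0 := hmap
    exact_mod_cast hcast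
  exact master A hhyp T hTconn hcardbound (le_of_eq hdetT)
end

section
/- Let A be an n×n symmetrizable generalized Cartan matrix with Weyl group W acting on ℚ^n, and let i and j be indices lying in different connected components of the simply laced skeleton of A. Then the Weyl group orbits W·e_i and W·e_j are disjoint. -/
/-- The Weyl group of an `n × n` GCM `A`: the subgroup of linear automorphisms of `ℚ^n`
generated by the simple reflections `s i`, where `s i (e j) = e j - A i j • e i`. -/
def weylGroup {n : ℕ} (A : Matrix (Fin n) (Fin n) ℤ) :
    Subgroup ((Fin n → ℚ) ≃ₗ[ℚ] (Fin n → ℚ)) :=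
  Subgroup.closure {w | ∃ i, ∀ j, w (Pi.single j 1) =
    (Pi.single j 1 : Fin n → ℚ) - (A i j : ℚ) • (Pi.single i 1 : Fin n → ℚ)}

/-- The orbit of the simple root `e i` under the Weyl group of `A`. -/
def weylOrbit {n : ℕ} (A : Matrix (Fin n) (Fin n) ℤ) (i : Fin n) : Set (Fin n → ℚ) :=
  {v | ∃ w ∈ weylGroup A, w (Pi.single i 1) = v}

/-- The simply laced skeleton of `A`: the simple graph with `i` adjacent to `j` iff
`i ≠ j` and `A i j = -1 = A j i`. -/
def skeleton {n : ℕ} (A : Matrix (Fin n) (Fin n) ℤ) : SimpleGraph (Fin n) where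
  Adj i j := i ≠ j ∧ A i j = -1 ∧ A j i = -1
  symm := by constructor; intro i j h; exact ⟨h.1.symm, h.2.2, h.2.1⟩
  loopless := by constructor; intro i h; exact h.1 rfl

namespace GCMAux

open CoxeterSystem

variable {n : ℕ}

noncomputable abbrev ε (m : Fin n) : Fin n → ℚ := Pi.single m 1

variable (A : Matrix (Fin n) (Fin n) ℤ)

/-- The coroot functional `x ↦ ∑ r, A m r * x r`. -/
def FF (m : Fin n) (x : Fin n → ℚ) : ℚ := ∑ r, (A m r : ℚ) * x r

lemma FF_add (m : Fin n) (x y : Fin n → ℚ) : FF A m (x + y) = FF A m x + FF A m y := by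
  simp [FF, mul_add, Finset.sum_add_distrib]

lemma FF_sub (m : Fin n) (x y : Fin n → ℚ) : FF A m (x - y) = FF A m x - FF A m y := by
  simp [FF, mul_sub, Finset.sum_sub_distrib]

lemma FF_smul (m : Fin n) (c : ℚ) (x : Fin n → ℚ) : FF A m (c • x) = c * FF A m x := by
  simp [FF, Finset.mul_sum]; congr 1; ext r; ring

lemma FF_single (m r : Fin n) : FF A m (ε r) = A m r := by
  simp only [FF]
  rw [Finset.sum_eq_single r]
  · simp
  · intro t _ ht; simp [Pi.single_eq_of_ne ht]
  · simp

/-- The simple reflection as a linear map. -/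
noncomputable def Smap (m : Fin n) : (Fin n → ℚ) →ₗ[ℚ] (Fin n → ℚ) where
  toFun x := x - FF A m x • ε m
  map_add' x y := by show (x + y) - FF A m (x + y) • ε m = _; rw [FF_add]; module
  map_smul' c x := by
    show (c • x) - FF A m (c • x) • ε m = (RingHom.id ℚ) c • (x - FF A m x • ε m)
    rw [FF_smul]; simp only [RingHom.id_apply]; module

lemma Smap_apply (m : Fin n) (x : Fin n → ℚ) : Smap A m x = x - FF A m x • ε m := rfl

lemma Smap_invol (hA : IsGCM A) (m : Fin n) (x : Fin n → ℚ) : Smap A m (Smap A m x) = x := by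
  rw [Smap_apply, Smap_apply, FF_sub, FF_smul, FF_single]
  rw [hA.1 m]
  push_cast
  module

/-- The simple reflection as a linear automorphism. -/
noncomputable def σ (hA : IsGCM A) (m : Fin n) : (Fin n → ℚ) ≃ₗ[ℚ] (Fin n → ℚ) :=
  LinearEquiv.ofLinear (Smap A m) (Smap A m)
    (LinearMap.ext (Smap_invol A hA m)) (LinearMap.ext (Smap_invol A hA m))

lemma σ_apply (hA : IsGCM A) (m : Fin n) (x : Fin n → ℚ) : σ A hA m x = x - FF A m x • ε m := rfl

lemma σ_single (hA : IsGCM A) (m r : Fin n) : σ A hA m (ε r) = ε r - (A m r : ℚ) • ε m := by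
  rw [σ_apply, FF_single]

lemma mulApply (e₁ e₂ : (Fin n → ℚ) ≃ₗ[ℚ] (Fin n → ℚ)) (x : Fin n → ℚ) :
    (e₁ * e₂) x = e₁ (e₂ x) := rfl

lemma oneApply (x : Fin n → ℚ) : (1 : (Fin n → ℚ) ≃ₗ[ℚ] (Fin n → ℚ)) x = x := rfl



/-! ### The Coxeter matrix of a GCM -/

def qz (p : ℤ) : ℕ := if p = 0 then 2 else if p = 1 then 3 else if p = 2 then 4
  else if p = 3 then 6 else 0

/-- The Coxeter matrix associated to a GCM. -/
def CM : CoxeterMatrix (Fin n) where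
  M := Matrix.of fun k l => if k = l then 1 else qz (A k l * A l k)
  isSymm := by
    rw [Matrix.IsSymm]
    ext k l
    simp only [Matrix.transpose_apply, Matrix.of_apply]
    by_cases h : k = l
    · simp [h]
    · rw [if_neg (fun e => h e.symm), if_neg h, mul_comm]
  diagonal := by intro i; simp
  off_diagonal := by
    intro k l h
    simp only [Matrix.of_apply, if_neg h, qz]
    split_ifs <;> omega

lemma CM_diag (k : Fin n) : CM A k k = 1 := by simp [CM]

lemma CM_off {k l : Fin n} (h : k ≠ l) : CM A k l = qz (A k l * A l k) := by
  simp [CM, h]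

lemma Adiag (hA : IsGCM A) (m : Fin n) : ((A m m : ℤ) : ℚ) = 2 := by
  rw [hA.1 m]; norm_num

/-! ### Dihedral relations in the representation -/

section Dihedral

variable (hA : IsGCM A)

lemma sigma2_form (k l : Fin n) (x : Fin n → ℚ) :
    σ A hA k (σ A hA l x) =
      x + ((A k l : ℚ) * FF A l x - FF A k x) • ε k + (-(FF A l x)) • ε l := by
  simp only [σ_apply, FF_sub, FF_smul, FF_single]
  module

lemma sigma2_shift (k l : Fin n) (x : Fin n → ℚ) (c d : ℚ) :
    σ A hA k (σ A hA l (x + c • ε k + d • ε l)) =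
      σ A hA k (σ A hA l x)
        + (((A k l : ℚ) * (A l k : ℚ) - 1) * c + (A k l : ℚ) * d) • ε k
        + (-((A l k : ℚ) * c) - d) • ε l := by
  simp only [σ_apply, FF_add, FF_sub, FF_smul, FF_single, Adiag A hA]
  module

/-- order two: disconnected vertices -/
lemma rel_two {k l : Fin n} (hkl : k ≠ l) (ha : (A k l : ℚ) = 0) (hb : (A l k : ℚ) = 0) :
    (σ A hA k * σ A hA l) ^ 2 = 1 := by
  have Gs : ∀ (x : Fin n → ℚ) (c d : ℚ),
      σ A hA k (σ A hA l (x + c • ε k + d • ε l)) =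
        σ A hA k (σ A hA l x) + (-c) • ε k + (-d) • ε l := by
    intro x c d
    rw [sigma2_shift A hA k l, ha, hb]
    module
  apply LinearEquiv.toLinearMap_injective
  apply LinearMap.ext
  intro x
  have h1 := sigma2_form A hA k l x
  set c := (A k l : ℚ) * FF A l x - FF A k x with hc
  set d := -(FF A l x) with hd
  have h2 : σ A hA k (σ A hA l (σ A hA k (σ A hA l x))) = x := by
    rw [h1, Gs, h1]; module
  show (σ A hA k * σ A hA l) ((σ A hA k * σ A hA l) x) = x
  simpa only [mulApply] using h2

lemma σ_mul_self (m : Fin n) : σ A hA m * σ A hA m = 1 := by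
  apply LinearEquiv.toLinearMap_injective
  apply LinearMap.ext
  intro x
  show σ A hA m (σ A hA m x) = x
  exact Smap_invol A hA m x

lemma σ_inv (m : Fin n) : (σ A hA m)⁻¹ = σ A hA m :=
  inv_eq_of_mul_eq_one_right (σ_mul_self A hA m)

/-- order three -/
lemma rel_three {k l : Fin n} (ha : (A k l : ℚ) = -1) (hb : (A l k : ℚ) = -1) :
    (σ A hA k * σ A hA l) ^ 3 = 1 := by
  have Gs : ∀ (x : Fin n → ℚ) (c d : ℚ),
      σ A hA k (σ A hA l (x + c • ε k + d • ε l)) =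
        σ A hA k (σ A hA l x) + (-d) • ε k + (c - d) • ε l := by
    intro x c d
    rw [sigma2_shift A hA k l, ha, hb]
    module
  apply LinearEquiv.toLinearMap_injective
  apply LinearMap.ext
  intro x
  have h1 := sigma2_form A hA k l x
  set c := (A k l : ℚ) * FF A l x - FF A k x with hc
  set d := -(FF A l x) with hd
  have h2 : σ A hA k (σ A hA l (σ A hA k (σ A hA l x))) =
      x + (c - d) • ε k + c • ε l := by
    rw [h1, Gs, h1]; module
  have h3 : σ A hA k (σ A hA l (σ A hA k (σ A hA l (σ A hA k (σ A hA l x))))) = x := by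
    rw [h2, Gs, h1]; module
  show (σ A hA k * σ A hA l) ((σ A hA k * σ A hA l) ((σ A hA k * σ A hA l) x)) = x
  simpa only [mulApply] using h3

/-- order four -/
lemma rel_four {k l : Fin n} (ha : (A k l : ℚ) = -1) (hb : (A l k : ℚ) = -2) :
    (σ A hA k * σ A hA l) ^ 4 = 1 := by
  have Gs : ∀ (x : Fin n → ℚ) (c d : ℚ),
      σ A hA k (σ A hA l (x + c • ε k + d • ε l)) =
        σ A hA k (σ A hA l x) + (c - d) • ε k + (2*c - d) • ε l := by
    intro x c d
    rw [sigma2_shift A hA k l, ha, hb]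
    module
  apply LinearEquiv.toLinearMap_injective
  apply LinearMap.ext
  intro x
  have h1 := sigma2_form A hA k l x
  set c := (A k l : ℚ) * FF A l x - FF A k x with hc
  set d := -(FF A l x) with hd
  have h2 : σ A hA k (σ A hA l (σ A hA k (σ A hA l x))) =
      x + (2*c - d) • ε k + (2*c) • ε l := by
    rw [h1, Gs, h1]; module
  have h3 : σ A hA k (σ A hA l (σ A hA k (σ A hA l (σ A hA k (σ A hA l x))))) =
      x + (c - d) • ε k + (2*c - d) • ε l := by
    rw [h2, Gs, h1]; module
  have h4 : σ A hA k (σ A hA l (σ A hA k (σ A hA l (σ A hA k (σ A hA l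
      (σ A hA k (σ A hA l x))))))) = x := by
    rw [h3, Gs, h1]; module
  show (σ A hA k * σ A hA l) ((σ A hA k * σ A hA l) ((σ A hA k * σ A hA l)
    ((σ A hA k * σ A hA l) x))) = x
  simpa only [mulApply] using h4

/-- order six -/
lemma rel_six {k l : Fin n} (ha : (A k l : ℚ) = -1) (hb : (A l k : ℚ) = -3) :
    (σ A hA k * σ A hA l) ^ 6 = 1 := by
  have Gs : ∀ (x : Fin n → ℚ) (c d : ℚ),
      σ A hA k (σ A hA l (x + c • ε k + d • ε l)) =
        σ A hA k (σ A hA l x) + (2*c - d) • ε k + (3*c - d) • ε l := by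
    intro x c d
    rw [sigma2_shift A hA k l, ha, hb]
    module
  apply LinearEquiv.toLinearMap_injective
  apply LinearMap.ext
  intro x
  have h1 := sigma2_form A hA k l x
  set c := (A k l : ℚ) * FF A l x - FF A k x with hc
  set d := -(FF A l x) with hd
  have h2 : σ A hA k (σ A hA l (σ A hA k (σ A hA l x))) =
      x + (3*c - d) • ε k + (3*c) • ε l := by
    rw [h1, Gs, h1]; module
  have h3 : σ A hA k (σ A hA l (σ A hA k (σ A hA l (σ A hA k (σ A hA l x))))) =
      x + (4*c - 2*d) • ε k + (6*c - 2*d) • ε l := by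
    rw [h2, Gs, h1]; module
  have h4 : σ A hA k (σ A hA l (σ A hA k (σ A hA l (σ A hA k (σ A hA l
      (σ A hA k (σ A hA l x))))))) = x + (3*c - 2*d) • ε k + (6*c - 3*d) • ε l := by
    rw [h3, Gs, h1]; module
  have h5 : σ A hA k (σ A hA l (σ A hA k (σ A hA l (σ A hA k (σ A hA l (σ A hA k
      (σ A hA l (σ A hA k (σ A hA l x))))))))) = x + (c - d) • ε k + (3*c - 2*d) • ε l := by
    rw [h4, Gs, h1]; module
  have h6 : σ A hA k (σ A hA l (σ A hA k (σ A hA l (σ A hA k (σ A hA l (σ A hA k (σ A hA l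
      (σ A hA k (σ A hA l (σ A hA k (σ A hA l x))))))))))) = x := by
    rw [h5, Gs, h1]; module
  show (σ A hA k * σ A hA l) ((σ A hA k * σ A hA l) ((σ A hA k * σ A hA l)
    ((σ A hA k * σ A hA l) ((σ A hA k * σ A hA l) ((σ A hA k * σ A hA l) x))))) = x
  simpa only [mulApply] using h6

/-- transfer a relation to the reversed pair -/
lemma rel_symm {k l : Fin n} {m : ℕ} (h : (σ A hA l * σ A hA k) ^ m = 1) :
    (σ A hA k * σ A hA l) ^ m = 1 := by
  have e : σ A hA k * σ A hA l = (σ A hA l * σ A hA k)⁻¹ := by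
    rw [mul_inv_rev, σ_inv, σ_inv]
  rw [e, inv_pow, h, inv_one]

end Dihedral

/-! ### The geometric representation -/

section Rep

variable (hA : IsGCM A)

lemma liftable : CoxeterMatrix.IsLiftable (CM A) (fun m => σ A hA m) := by
  intro k l
  by_cases hkl : k = l
  · subst hkl; rw [CM_diag, pow_one]; exact σ_mul_self A hA k
  · rw [CM_off A hkl]
    have hle : A k l ≤ 0 := hA.2.1 k l hkl
    have hle' : A l k ≤ 0 := hA.2.1 l k (Ne.symm hkl)
    by_cases h0 : A k l = 0
    · have h0' : A l k = 0 := hA.2.2 k l h0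
      rw [h0, h0']
      norm_num [qz]
      exact rel_two A hA hkl (by rw [h0]; norm_num) (by rw [h0']; norm_num)
    · have h0' : A l k ≠ 0 := fun e => h0 (hA.2.2 l k e)
      have h1 : A k l ≤ -1 := by omega
      have h1' : A l k ≤ -1 := by omega
      have hp1 : 1 ≤ A k l * A l k := by nlinarith
      rcases (show A k l * A l k = 1 ∨ A k l * A l k = 2 ∨ A k l * A l k = 3 ∨
          4 ≤ A k l * A l k by omega) with h | h | h | h
      · have e1 : A k l = -1 := by nlinarith
        have e2 : A l k = -1 := by rw [e1] at h; omega
        rw [h]; norm_num [qz]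
        exact rel_three A hA (by rw [e1]; norm_num) (by rw [e2]; norm_num)
      · have hge : -2 ≤ A k l := by nlinarith
        rw [h]; norm_num [qz]
        rcases (show A k l = -1 ∨ A k l = -2 by omega) with e1 | e1
        · have e2 : A l k = -2 := by rw [e1] at h; omega
          exact rel_four A hA (by rw [e1]; norm_num) (by rw [e2]; norm_num)
        · have e2 : A l k = -1 := by rw [e1] at h; omega
          exact rel_symm A hA
            (rel_four A hA (by rw [e2]; norm_num) (by rw [e1]; norm_num))
      · have hge : -3 ≤ A k l := by nlinarith
        rw [h]; norm_num [qz]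
        rcases (show A k l = -1 ∨ A k l = -2 ∨ A k l = -3 by omega) with e1 | e1 | e1
        · have e2 : A l k = -3 := by rw [e1] at h; omega
          exact rel_six A hA (by rw [e1]; norm_num) (by rw [e2]; norm_num)
        · exfalso; rw [e1] at h; omega
        · have e2 : A l k = -1 := by rw [e1] at h; omega
          exact rel_symm A hA
            (rel_six A hA (by rw [e2]; norm_num) (by rw [e1]; norm_num))
      · have : qz (A k l * A l k) = 0 := by
          unfold qz; split_ifs <;> omega
        rw [this, pow_zero]

/-- The Coxeter group of the GCM. -/
abbrev CG := (CM A).Group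

/-- The canonical Coxeter system. -/
def csA : CoxeterSystem (CM A) (CG A) := (CM A).toCoxeterSystem

/-- The geometric representation. -/
noncomputable def rep : CG A →* ((Fin n → ℚ) ≃ₗ[ℚ] (Fin n → ℚ)) :=
  (csA A).lift ⟨fun m => σ A hA m, liftable A hA⟩

lemma rep_simple (m : Fin n) : rep A hA ((csA A).simple m) = σ A hA m :=
  (csA A).lift_apply_simple (liftable A hA) m

end Rep

/-! ### The cone sequence -/

def coneSeq (a b : ℚ) : ℕ → ℚ × ℚ
  | 0 => (1, 0)
  | t+1 => if Even t then ((coneSeq a b t).1, -b * (coneSeq a b t).1 - (coneSeq a b t).2)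
      else (-a * (coneSeq a b t).2 - (coneSeq a b t).1, (coneSeq a b t).2)

lemma coneSeq_nonneg_inf (a b : ℚ) (ha : a ≤ -1) (hb : b ≤ -1) (hab : 4 ≤ a * b) :
    ∀ t, 0 ≤ (coneSeq a b t).1 ∧ 0 ≤ (coneSeq a b t).2 ∧
      (Even t → 2 * (coneSeq a b t).2 ≤ -b * (coneSeq a b t).1) ∧
      (¬ Even t → 2 * (coneSeq a b t).1 ≤ -a * (coneSeq a b t).2) := by
  intro t
  induction t with
  | zero =>
    refine ⟨by norm_num [coneSeq], by norm_num [coneSeq], ?_, ?_⟩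
    · intro _; simp only [coneSeq]; nlinarith
    · intro h; exact absurd Even.zero h
  | succ t ih =>
    obtain ⟨hX, hY, hE, hO⟩ := ih
    by_cases he : Even t
    · have h2 := hE he
      have hne : ¬ Even (t+1) := by simp [Nat.even_add_one, he]
      refine ⟨?_, ?_, fun h => absurd h hne, fun _ => ?_⟩
      · simp only [coneSeq, if_pos he]; exact hX
      · simp only [coneSeq, if_pos he]; linarith
      · simp only [coneSeq, if_pos he]
        nlinarith [mul_le_mul_of_nonpos_left h2 (by linarith : a ≤ 0),
          mul_nonneg hX (by linarith : (0:ℚ) ≤ a*b - 4)]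
    · have h2 := hO he
      have hne : Even (t+1) := by simp [Nat.even_add_one, he]
      refine ⟨?_, ?_, fun _ => ?_, fun h => absurd hne h⟩
      · simp only [coneSeq, if_neg he]; linarith
      · simp only [coneSeq, if_neg he]; exact hY
      · simp only [coneSeq, if_neg he]
        nlinarith [mul_le_mul_of_nonpos_left h2 (by linarith : b ≤ 0),
          mul_nonneg hY (by linarith : (0:ℚ) ≤ a*b - 4)]

lemma cone_apply (hA : IsGCM A) (k l : Fin n) (t : ℕ) :
    rep A hA ((csA A).wordProd (alternatingWord k l t)) (ε k) =
      (coneSeq (A k l : ℚ) (A l k : ℚ) t).1 • ε k +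
        (coneSeq (A k l : ℚ) (A l k : ℚ) t).2 • ε l := by
  induction t with
  | zero =>
    show rep A hA ((csA A).wordProd []) (ε k) = _
    rw [CoxeterSystem.wordProd_nil, map_one, oneApply]
    simp only [coneSeq]
    module
  | succ t ih =>
    rw [alternatingWord_succ', CoxeterSystem.wordProd_cons, map_mul, mulApply, ih, rep_simple]
    by_cases he : Even t
    · rw [if_pos he]
      simp only [coneSeq, if_pos he]
      rw [map_add, map_smul, map_smul, σ_single, σ_single]
      rw [Adiag A hA l]
      module
    · rw [if_neg he]
      simp only [coneSeq, if_neg he]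
      rw [map_add, map_smul, map_smul, σ_single, σ_single]
      rw [Adiag A hA k]
      module

lemma coneSeq_nonneg (hA : IsGCM A) {k l : Fin n} (hkl : k ≠ l) (t : ℕ)
    (htb : CM A k l = 0 ∨ t < CM A k l) :
    0 ≤ (coneSeq (A k l : ℚ) (A l k : ℚ) t).1 ∧
      0 ≤ (coneSeq (A k l : ℚ) (A l k : ℚ) t).2 := by
  have hle : A k l ≤ 0 := hA.2.1 k l hkl
  have hle' : A l k ≤ 0 := hA.2.1 l k (Ne.symm hkl)
  by_cases h0 : A k l = 0
  · have h0' : A l k = 0 := hA.2.2 k l h0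
    have hcm : CM A k l = 2 := by rw [CM_off A hkl, h0, h0']; norm_num [qz]
    have ht2 : t < 2 := by rw [hcm] at htb; omega
    rw [h0, h0']
    interval_cases t <;> norm_num [coneSeq, Nat.even_iff]
  · have h0' : A l k ≠ 0 := fun e => h0 (hA.2.2 l k e)
    have h1 : A k l ≤ -1 := by omega
    have h1' : A l k ≤ -1 := by omega
    have hp1 : 1 ≤ A k l * A l k := by nlinarith
    rcases (show A k l * A l k = 1 ∨ A k l * A l k = 2 ∨ A k l * A l k = 3 ∨
        4 ≤ A k l * A l k by omega) with h | h | h | h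
    · have e1 : A k l = -1 := by nlinarith
      have e2 : A l k = -1 := by rw [e1] at h; omega
      have hcm : CM A k l = 3 := by rw [CM_off A hkl, h]; norm_num [qz]
      have ht2 : t < 3 := by rw [hcm] at htb; omega
      rw [e1, e2]
      interval_cases t <;> norm_num [coneSeq, Nat.even_iff]
    · have hge : -2 ≤ A k l := by nlinarith
      have hcm : CM A k l = 4 := by rw [CM_off A hkl, h]; norm_num [qz]
      have ht2 : t < 4 := by rw [hcm] at htb; omega
      rcases (show A k l = -1 ∨ A k l = -2 by omega) with e1 | e1
      · have e2 : A l k = -2 := by rw [e1] at h; omega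
        rw [e1, e2]
        interval_cases t <;> norm_num [coneSeq, Nat.even_iff]
      · have e2 : A l k = -1 := by rw [e1] at h; omega
        rw [e1, e2]
        interval_cases t <;> norm_num [coneSeq, Nat.even_iff]
    · have hge : -3 ≤ A k l := by nlinarith
      have hcm : CM A k l = 6 := by rw [CM_off A hkl, h]; norm_num [qz]
      have ht2 : t < 6 := by rw [hcm] at htb; omega
      rcases (show A k l = -1 ∨ A k l = -2 ∨ A k l = -3 by omega) with e1 | e1 | e1
      · have e2 : A l k = -3 := by rw [e1] at h; omega
        rw [e1, e2]
        interval_cases t <;> norm_num [coneSeq, Nat.even_iff]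
      · exfalso; rw [e1] at h; omega
      · have e2 : A l k = -1 := by rw [e1] at h; omega
        rw [e1, e2]
        interval_cases t <;> norm_num [coneSeq, Nat.even_iff]
    · have hq := coneSeq_nonneg_inf (A k l : ℚ) (A l k : ℚ)
        (by exact_mod_cast h1) (by exact_mod_cast h1')
        (by
          have hc : ((A k l * A l k : ℤ) : ℚ) = (A k l : ℚ) * (A l k : ℚ) := by push_cast; ring
          rw [← hc]; exact_mod_cast h) t
      exact ⟨hq.1, hq.2.1⟩

/-! ### Positivity of roots -/

theorem positivity (hA : IsGCM A) :
    ∀ (N : ℕ) (w : CG A) (k : Fin n), (csA A).length w ≤ N →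
      ¬ (csA A).IsRightDescent w k → ∀ r, 0 ≤ rep A hA w (ε k) r := by
  intro N
  induction N with
  | zero =>
    intro w k hlen _ r
    have hw : w = 1 := (csA A).length_eq_zero_iff.mp (Nat.le_zero.mp hlen)
    subst hw
    rw [map_one, oneApply]
    by_cases hr : r = k
    · subst hr; simp
    · simp [Pi.single_eq_of_ne hr]
  | succ N IH =>
    intro w k hlen hk r
    by_cases hsmall : (csA A).length w ≤ N
    · exact IH w k hsmall hk r
    have hw1 : w ≠ 1 := by
      intro h
      rw [h, (csA A).length_one] at hsmall
      omega
    obtain ⟨l, hl⟩ := (csA A).exists_rightDescent_of_ne_one hw1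
    have hkl : k ≠ l := by rintro rfl; exact hk hl
    have hwk : (csA A).length (w * (csA A).simple k) = (csA A).length w + 1 :=
      (csA A).not_isRightDescent_iff.mp hk
    have terminal : ∀ (u : CG A) (t : ℕ), 1 ≤ t →
        w = u * (csA A).wordProd (alternatingWord k l t) →
        (csA A).length w = (csA A).length u + t →
        ¬ (csA A).IsRightDescent u k → ¬ (csA A).IsRightDescent u l →
        0 ≤ rep A hA w (ε k) r := by
      intro u t ht hw hlent huk hul
      -- bound on t via reducedness of the alternating word
      have hz : (csA A).wordProd (alternatingWord k l t) * (csA A).simple k =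
          (csA A).wordProd (alternatingWord l k (t+1)) := by
        rw [alternatingWord_succ, CoxeterSystem.wordProd_concat]
      have hwsk : w * (csA A).simple k = u * (csA A).wordProd (alternatingWord l k (t+1)) := by
        rw [hw, mul_assoc, hz]
      have hlen1 : t + 1 ≤ (csA A).length ((csA A).wordProd (alternatingWord l k (t+1))) := by
        have h1 := (csA A).length_mul_le u ((csA A).wordProd (alternatingWord l k (t+1)))
        rw [← hwsk, hwk, hlent] at h1
        omega
      have hred : (csA A).IsReduced (alternatingWord l k (t+1)) := by
        have h2 := (csA A).length_wordProd_le (alternatingWord l k (t+1))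
        rw [CoxeterSystem.length_alternatingWord] at h2
        unfold CoxeterSystem.IsReduced
        rw [CoxeterSystem.length_alternatingWord]
        omega
      have htb : CM A k l = 0 ∨ t < CM A k l := by
        by_cases hcm0 : CM A k l = 0
        · exact Or.inl hcm0
        · right
          by_contra hcon
          push_neg at hcon
          refine (csA A).not_isReduced_alternatingWord l k ?_ ?_ hred
          · rw [(CM A).symmetric l k]; exact hcm0
          · rw [(CM A).symmetric l k]; omega
      obtain ⟨hc1, hc2⟩ := coneSeq_nonneg A hA hkl t htb
      have hulen : (csA A).length u ≤ N := by omega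
      have hcone := cone_apply A hA k l t
      have hfin : rep A hA w (ε k) =
          (coneSeq (A k l : ℚ) (A l k : ℚ) t).1 • rep A hA u (ε k) +
            (coneSeq (A k l : ℚ) (A l k : ℚ) t).2 • rep A hA u (ε l) := by
        rw [hw, map_mul, mulApply, hcone, map_add, map_smul, map_smul]
      rw [hfin]
      have p1 := IH u k hulen huk r
      have p2 := IH u l hulen hul r
      have : (0:ℚ) ≤ (coneSeq (A k l : ℚ) (A l k : ℚ) t).1 * rep A hA u (ε k) r +
          (coneSeq (A k l : ℚ) (A l k : ℚ) t).2 * rep A hA u (ε l) r :=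
        add_nonneg (mul_nonneg hc1 p1) (mul_nonneg hc2 p2)
      simpa using this
    have walk : ∀ (fuel : ℕ) (u : CG A) (t : ℕ), (csA A).length u ≤ fuel → 1 ≤ t →
        w = u * (csA A).wordProd (alternatingWord k l t) →
        (csA A).length w = (csA A).length u + t →
        (csA A).length (u * (csA A).simple (if Even t then k else l)) =
          (csA A).length u + 1 →
        0 ≤ rep A hA w (ε k) r := by
      intro fuel
      induction fuel with
      | zero =>
        intro u t hfu ht hw hlent hI4
        have hu0 : (csA A).length u = 0 := Nat.le_zero.mp hfu
        have hnd : ∀ m : Fin n, ¬ (csA A).IsRightDescent u m := by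
          intro m hd
          unfold CoxeterSystem.IsRightDescent at hd
          omega
        exact terminal u t ht hw hlent (hnd k) (hnd l)
      | succ f ihf =>
        intro u t hfu ht hw hlent hI4
        by_cases hdx : (csA A).IsRightDescent u (if Even t then l else k)
        · -- continue the walk
          set x := if Even t then l else k with hx
          have hxx : (csA A).length (u * (csA A).simple x) + 1 = (csA A).length u :=
            (csA A).isRightDescent_iff.mp hdx
          have hnext : (csA A).wordProd (alternatingWord k l (t+1)) =
              (csA A).simple x * (csA A).wordProd (alternatingWord k l t) := by
            rw [alternatingWord_succ', CoxeterSystem.wordProd_cons]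
          have hlett : (if Even (t+1) then k else l) = x := by
            by_cases he : Even t
            · have h1 : ¬ Even (t+1) := by rw [Nat.even_add_one]; exact not_not_intro he
              rw [hx, if_neg h1, if_pos he]
            · have h1 : Even (t+1) := Nat.even_add_one.mpr he
              rw [hx, if_pos h1, if_neg he]
          apply ihf (u * (csA A).simple x) (t+1)
          · omega
          · omega
          · rw [hnext, mul_assoc u, CoxeterSystem.simple_mul_simple_cancel_left]
            exact hw
          · omega
          · rw [hlett, CoxeterSystem.simple_mul_simple_cancel_right]
            omega
        · -- terminal
          have hI4' : ¬ (csA A).IsRightDescent u (if Even t then k else l) :=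
            (csA A).not_isRightDescent_iff.mpr hI4
          by_cases he : Even t
          · rw [if_pos he] at hdx hI4'
            exact terminal u t ht hw hlent hI4' hdx
          · rw [if_neg he] at hdx hI4'
            exact terminal u t ht hw hlent hdx hI4'
    -- start the walk at u = w * s l, t = 1
    have hll : (csA A).length (w * (csA A).simple l) + 1 = (csA A).length w :=
      (csA A).isRightDescent_iff.mp hl
    apply walk ((csA A).length w) (w * (csA A).simple l) 1
    · omega
    · omega
    · have h1 : alternatingWord k l 1 = [l] := rfl
      rw [h1, CoxeterSystem.wordProd_singleton, CoxeterSystem.simple_mul_simple_cancel_right]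
    · omega
    · have h1 : (if Even 1 then k else l) = l := by norm_num
      rw [h1, CoxeterSystem.simple_mul_simple_cancel_right]
      omega

/-! ### Faithfulness -/

lemma rep_ker (hA : IsGCM A) (w : CG A) (hw : rep A hA w = 1) : w = 1 := by
  by_contra hne
  obtain ⟨k, hk⟩ := (csA A).exists_rightDescent_of_ne_one hne
  have hnd : ¬ (csA A).IsRightDescent (w * (csA A).simple k) k :=
    ((csA A).isRightDescent_iff_not_isRightDescent_mul).mp hk
  have hp := positivity A hA ((csA A).length (w * (csA A).simple k))
    (w * (csA A).simple k) k le_rfl hnd k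
  rw [map_mul, hw, one_mul, rep_simple, σ_single, Adiag A hA] at hp
  simp [Pi.single_apply] at hp

lemma rep_injective (hA : IsGCM A) : Function.Injective (rep A hA) := by
  intro u v h
  have h1 : rep A hA (u * v⁻¹) = 1 := by
    rw [map_mul, map_inv, h, mul_inv_cancel]
  have := rep_ker A hA _ h1
  rwa [mul_inv_eq_one] at this

/-! ### Identification of the Weyl group with the image of the representation -/

lemma mem_gen_set (hA : IsGCM A) {w : (Fin n → ℚ) ≃ₗ[ℚ] (Fin n → ℚ)}
    (hw : w ∈ {w : (Fin n → ℚ) ≃ₗ[ℚ] (Fin n → ℚ) | ∃ i, ∀ j, w (Pi.single j 1) =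
      (Pi.single j 1 : Fin n → ℚ) - (A i j : ℚ) • (Pi.single i 1 : Fin n → ℚ)}) :
    ∃ m, w = σ A hA m := by
  obtain ⟨m, hm⟩ := hw
  refine ⟨m, ?_⟩
  apply LinearEquiv.toLinearMap_injective
  apply LinearMap.ext
  intro x
  have hx : x = ∑ j, x j • (Pi.single j 1 : Fin n → ℚ) := by
    funext r
    simp [Pi.single_apply]
  show w x = σ A hA m x
  conv_lhs => rw [hx]
  conv_rhs => rw [hx]
  rw [map_sum, map_sum]
  refine Finset.sum_congr rfl fun j _ => ?_
  rw [map_smul, map_smul, hm j, σ_single]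

lemma range_eq (hA : IsGCM A) : (rep A hA).range = weylGroup A := by
  apply le_antisymm
  · rintro _ ⟨g, rfl⟩
    induction g using CoxeterSystem.simple_induction (cs := csA A) with
    | simple m =>
      rw [rep_simple]
      exact Subgroup.subset_closure ⟨m, fun j => σ_single A hA m j⟩
    | one => rw [map_one]; exact one_mem _
    | mul u v hu hv => rw [map_mul]; exact mul_mem hu hv
  · rw [weylGroup]
    rw [Subgroup.closure_le]
    intro w hw
    obtain ⟨m, rfl⟩ := mem_gen_set A hA hw
    exact ⟨(csA A).simple m, rep_simple A hA m⟩

/-! ### The invariant bilinear form -/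

section Bform

variable (d : Fin n → ℚ)

def Bf (x y : Fin n → ℚ) : ℚ := ∑ k, ∑ l, (d k * (A k l : ℚ)) * (x k * y l)

lemma Bf_single_left (m : Fin n) (y : Fin n → ℚ) :
    Bf A d (ε m) y = d m * FF A m y := by
  unfold Bf FF
  rw [Finset.sum_eq_single m]
  · rw [Finset.mul_sum]
    refine Finset.sum_congr rfl fun l _ => ?_
    simp [Pi.single_apply]
    ring
  · intro t _ ht
    apply Finset.sum_eq_zero
    intro l _
    simp [Pi.single_eq_of_ne ht]
  · simp

lemma Bf_single_right (hd : ∀ i j, d i * (A i j : ℚ) = d j * (A j i : ℚ))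
    (m : Fin n) (x : Fin n → ℚ) :
    Bf A d x (ε m) = d m * FF A m x := by
  unfold Bf FF
  rw [Finset.mul_sum]
  refine Finset.sum_congr rfl fun k _ => ?_
  rw [Finset.sum_eq_single m]
  · rw [← mul_assoc (d m), hd m k]
    simp [Pi.single_apply]
  · intro t _ ht
    simp [Pi.single_eq_of_ne ht]
  · simp

lemma Bf_sub_left (x z y : Fin n → ℚ) :
    Bf A d (x - z) y = Bf A d x y - Bf A d z y := by
  unfold Bf
  rw [← Finset.sum_sub_distrib]
  refine Finset.sum_congr rfl fun k _ => ?_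
  rw [← Finset.sum_sub_distrib]
  refine Finset.sum_congr rfl fun l _ => ?_
  simp only [Pi.sub_apply]
  ring

lemma Bf_sub_right (x y z : Fin n → ℚ) :
    Bf A d x (y - z) = Bf A d x y - Bf A d x z := by
  unfold Bf
  rw [← Finset.sum_sub_distrib]
  refine Finset.sum_congr rfl fun k _ => ?_
  rw [← Finset.sum_sub_distrib]
  refine Finset.sum_congr rfl fun l _ => ?_
  simp only [Pi.sub_apply]
  ring

lemma Bf_smul_left (c : ℚ) (z y : Fin n → ℚ) :
    Bf A d (c • z) y = c * Bf A d z y := by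
  unfold Bf
  rw [Finset.mul_sum]
  refine Finset.sum_congr rfl fun k _ => ?_
  rw [Finset.mul_sum]
  refine Finset.sum_congr rfl fun l _ => ?_
  simp only [Pi.smul_apply, smul_eq_mul]
  ring

lemma Bf_smul_right (c : ℚ) (x z : Fin n → ℚ) :
    Bf A d x (c • z) = c * Bf A d x z := by
  unfold Bf
  rw [Finset.mul_sum]
  refine Finset.sum_congr rfl fun k _ => ?_
  rw [Finset.mul_sum]
  refine Finset.sum_congr rfl fun l _ => ?_
  simp only [Pi.smul_apply, smul_eq_mul]
  ring

lemma Bf_sigma (hA : IsGCM A) (hd : ∀ i j, d i * (A i j : ℚ) = d j * (A j i : ℚ))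
    (m : Fin n) (x y : Fin n → ℚ) :
    Bf A d (σ A hA m x) (σ A hA m y) = Bf A d x y := by
  rw [σ_apply, σ_apply]
  simp only [Bf_sub_left, Bf_sub_right, Bf_smul_left, Bf_smul_right, Bf_single_left,
    Bf_single_right A d hd, FF_single, FF_smul, FF_sub, Adiag A hA]
  ring

lemma Bf_rep (hA : IsGCM A) (hd : ∀ i j, d i * (A i j : ℚ) = d j * (A j i : ℚ))
    (g : CG A) : ∀ x y, Bf A d (rep A hA g x) (rep A hA g y) = Bf A d x y := by
  induction g using CoxeterSystem.simple_induction (cs := csA A) with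
  | simple m =>
    intro x y
    rw [rep_simple]
    exact Bf_sigma A d hA hd m x y
  | one => intro x y; rw [map_one]; rfl
  | mul u v hu hv =>
    intro x y
    rw [map_mul, mulApply, mulApply, hu, hv]

end Bform

/-! ### Conjugation of simple reflections -/

lemma invApply_self (e : (Fin n → ℚ) ≃ₗ[ℚ] (Fin n → ℚ)) (x : Fin n → ℚ) :
    e⁻¹ (e x) = x := e.symm_apply_apply x

lemma applyInv_self (e : (Fin n → ℚ) ≃ₗ[ℚ] (Fin n → ℚ)) (x : Fin n → ℚ) :
    e (e⁻¹ x) = x := e.apply_symm_apply x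

lemma conj_simple (hA : IsGCM A) {d : Fin n → ℚ} (hdne : ∀ i, d i ≠ 0)
    (hd : ∀ i j, d i * (A i j : ℚ) = d j * (A j i : ℚ))
    {i j : Fin n} {g : CG A} (hg : rep A hA g (ε i) = ε j) :
    g * (csA A).simple i * g⁻¹ = (csA A).simple j := by
  have hdij : d i = d j := by
    have h1 := Bf_rep A d hA hd g (ε i) (ε i)
    rw [hg] at h1
    rw [Bf_single_left, Bf_single_left, FF_single, FF_single, Adiag A hA, Adiag A hA] at h1
    linarith
  apply rep_injective A hA
  rw [map_mul, map_mul, map_inv, rep_simple, rep_simple]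
  apply LinearEquiv.toLinearMap_injective
  apply LinearMap.ext
  intro x
  show (rep A hA g) ((σ A hA i) ((rep A hA g)⁻¹ x)) = σ A hA j x
  set y := (rep A hA g)⁻¹ x with hy
  have hgy : rep A hA g y = x := applyInv_self _ _
  have hFF : FF A i y = FF A j x := by
    have h2 := Bf_rep A d hA hd g (ε i) y
    rw [hg, hgy] at h2
    rw [Bf_single_left, Bf_single_left] at h2
    rw [hdij] at h2
    exact (mul_left_cancel₀ (hdne j) h2).symm
  rw [σ_apply, σ_apply, map_sub, map_smul, hgy, hg, hFF]

/-! ### The sign character -/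

open scoped Classical in
noncomputable def χfun (i : Fin n) : Fin n → ℤˣ :=
  fun m => if (skeleton A).Reachable m i then -1 else 1

lemma χ_liftable (hA : IsGCM A) (i : Fin n) :
    CoxeterMatrix.IsLiftable (CM A) (χfun A i) := by
  intro k l
  by_cases hkl : k = l
  · subst hkl
    rw [CM_diag, pow_one]
    unfold χfun
    split_ifs <;> decide
  · have hEven : (skeleton A).Reachable k i ≠ (skeleton A).Reachable l i →
        Even (CM A k l) := by
      intro hne
      have hp : A k l * A l k ≠ 1 := by
        intro he
        rcases Int.mul_eq_one_iff_eq_one_or_neg_one.mp he with ⟨e1, e2⟩ | ⟨e1, e2⟩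
        · have := hA.2.1 k l hkl; omega
        · have hadj : (skeleton A).Adj k l := ⟨hkl, e1, e2⟩
          exact hne (by
            rw [eq_iff_iff]
            exact ⟨fun hr => hadj.symm.reachable.trans hr,
              fun hr => hadj.reachable.trans hr⟩)
      rw [CM_off A hkl]
      unfold qz
      split_ifs <;> first | decide | (exact absurd (by assumption) hp)
    by_cases h1 : (skeleton A).Reachable k i <;> by_cases h2 : (skeleton A).Reachable l i
    · unfold χfun; rw [if_pos h1, if_pos h2]; norm_num
    · unfold χfun; rw [if_pos h1, if_neg h2, mul_one]
      exact (hEven (by simp [h1, h2])).neg_one_pow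
    · unfold χfun; rw [if_neg h1, if_pos h2, one_mul]
      exact (hEven (by simp [h1, h2])).neg_one_pow
    · unfold χfun; rw [if_neg h1, if_neg h2, mul_one, one_pow]

noncomputable def χ (hA : IsGCM A) (i : Fin n) : CG A →* ℤˣ :=
  (csA A).lift ⟨χfun A i, χ_liftable A hA i⟩

lemma χ_simple (hA : IsGCM A) (i m : Fin n) :
    χ A hA i ((csA A).simple m) = χfun A i m :=
  (csA A).lift_apply_simple (χ_liftable A hA i) m

end GCMAux

/-- If `i` and `j` lie in different connected components of the simply laced skeleton of a
symmetrizable GCM `A`, then the Weyl group orbits `W·e i` and `W·e j` are disjoint. -/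
theorem weylOrbits_disjoint_of_not_reachable {n : ℕ} (A : Matrix (Fin n) (Fin n) ℤ)
    (hA : IsGCM A) (hsym : IsSymmetrizable A) (i j : Fin n)
    (h : ¬ (skeleton A).Reachable i j) :
    Disjoint (weylOrbit A i) (weylOrbit A j) := by
  classical
  obtain ⟨d, hdne, hd⟩ := hsym
  rw [Set.disjoint_left]
  rintro v ⟨w1, hw1, he1⟩ ⟨w2, hw2, he2⟩
  have hmem : w2⁻¹ * w1 ∈ weylGroup A := mul_mem (inv_mem hw2) hw1
  rw [← GCMAux.range_eq A hA] at hmem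
  obtain ⟨g, hg⟩ := hmem
  have happ : GCMAux.rep A hA g (Pi.single i 1) = (Pi.single j 1 : Fin n → ℚ) := by
    rw [hg, GCMAux.mulApply, he1, ← he2, GCMAux.invApply_self]
  have hconj := GCMAux.conj_simple A hA hdne hd (i := i) (j := j) (g := g) happ
  have hchi := congrArg (GCMAux.χ A hA i) hconj
  rw [map_mul, map_mul, map_inv, GCMAux.χ_simple, GCMAux.χ_simple] at hchi
  have hsi : GCMAux.χfun A i i = -1 := if_pos (SimpleGraph.Reachable.refl i)
  have hsj : GCMAux.χfun A i j = 1 := if_neg (fun hr => h hr.symm)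
  rw [hsi, hsj] at hchi
  have hfin : (-1 : ℤˣ) = 1 := by
    rwa [mul_comm _ (-1 : ℤˣ), mul_assoc, mul_inv_cancel, mul_one] at hchi
  exact absurd hfin (by decide)
end
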